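/- arXiv:2005.05202 — 7 statements merged into one kernel-verified Lean document; each statement's English description precedes it below -/
import Mathlib

section
/- Let P be a real Banach space and P* its norm dual. A convex subset C of P* is weak*-closed if and only if, for every r > 0, the intersection of C with the closed ball of radius r in P* is weak*-closed. (Krein–Smulian theorem on weak*-closedness of convex sets.) -/
open Topology Metric Set
open scoped ENNReal
set_option maxHeartbeats 1000000
set_option synthInstance.maxHeartbeats 400000

namespace KreinSmulianAux

variable {P : Type*} [NormedAddCommGroup P] [NormedSpace ℝ P]

/-- The closed ball of radius `r` (dual norm) as a subset of the weak dual. -/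
def dball (P : Type*) [NormedAddCommGroup P] [NormedSpace ℝ P] (r : ℝ) :
    Set (WeakDual ℝ P) :=
  WeakDual.toStrongDual ⁻¹' Metric.closedBall 0 r

lemma mem_dball {r : ℝ} {f : WeakDual ℝ P} :
    f ∈ dball P r ↔ ‖WeakDual.toStrongDual f‖ ≤ r := by
  simp [dball, mem_closedBall_zero_iff]

lemma isClosed_dball (r : ℝ) : IsClosed (dball P r) :=
  WeakDual.isClosed_closedBall 0 r

lemma isCompact_dball (r : ℝ) : IsCompact (dball P r) :=
  WeakDual.isCompact_closedBall 0 r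

/-- polar of a finite set -/
def pol (F : Finset P) : Set (WeakDual ℝ P) := {f | ∀ x ∈ F, |f x| ≤ 1}

lemma isClosed_pol (F : Finset P) : IsClosed (pol (P := P) F) := by
  have : pol (P := P) F = ⋂ x ∈ F, {f : WeakDual ℝ P | |f x| ≤ 1} := by
    ext f; simp [pol]
  rw [this]
  refine isClosed_biInter fun x _ => ?_
  have hcont : Continuous fun f : WeakDual ℝ P => |f x| :=
    continuous_abs.comp (WeakDual.eval_continuous x)
  exact isClosed_le hcont continuous_const

lemma pol_antitone {F G : Finset P} (h : F ⊆ G) : pol (P := P) G ⊆ pol F :=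
  fun f hf x hx => hf x (h hx)

/-- Key compactness step. -/
lemma step (D : Set (WeakDual ℝ P)) {R s : ℝ} (hR : 0 < R) (hs : 0 < s)
    (hclosed : IsClosed (D ∩ dball P R)) (E : Set (WeakDual ℝ P)) (hE : IsClosed E)
    (hbound : ∀ f ∈ D ∩ E, 1 / s < ‖WeakDual.toStrongDual f‖) :
    ∃ F : Finset P, (∀ x ∈ F, ‖x‖ ≤ s) ∧
      ∀ f ∈ (D ∩ E) ∩ pol F, R < ‖WeakDual.toStrongDual f‖ := by
  classical
  by_contra hcon
  push_neg at hcon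
  -- every admissible finset has a point with small norm
  have hne : ∀ F : Finset P, (∀ x ∈ F, ‖x‖ ≤ s) →
      (((D ∩ dball P R) ∩ E) ∩ pol F).Nonempty := by
    intro F hF
    obtain ⟨f, hf, hfle⟩ := hcon F hF
    exact ⟨f, ⟨⟨⟨hf.1.1, mem_dball.2 hfle⟩, hf.1.2⟩, hf.2⟩⟩
  set ι : Type _ := {F : Finset P // ∀ x ∈ F, ‖x‖ ≤ s}
  have : Nonempty ι := ⟨⟨∅, by simp⟩⟩
  have hdir : Directed (· ⊇ ·) fun F : ι => ((D ∩ dball P R) ∩ E) ∩ pol F.1 := by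
    intro F G
    refine ⟨⟨F.1 ∪ G.1, ?_⟩, ?_, ?_⟩
    · intro x hx
      rcases Finset.mem_union.1 hx with h | h
      · exact F.2 x h
      · exact G.2 x h
    · exact fun f hf => ⟨hf.1, pol_antitone Finset.subset_union_left hf.2⟩
    · exact fun f hf => ⟨hf.1, pol_antitone Finset.subset_union_right hf.2⟩
  have hcl : ∀ F : ι, IsClosed (((D ∩ dball P R) ∩ E) ∩ pol F.1) :=
    fun F => ((hclosed.inter hE).inter (isClosed_pol F.1))
  have hcompact : ∀ F : ι, IsCompact (((D ∩ dball P R) ∩ E) ∩ pol F.1) := by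
    intro F
    refine (isCompact_dball (P := P) R).of_isClosed_subset (hcl F) ?_
    intro f hf; exact hf.1.1.2
  obtain ⟨f, hf⟩ := IsCompact.nonempty_iInter_of_directed_nonempty_isCompact_isClosed
    _ hdir (fun F => hne F.1 F.2) hcompact hcl
  simp only [Set.mem_iInter] at hf
  have hfDE : f ∈ D ∩ E := ⟨(hf ⟨∅, by simp⟩).1.1.1, (hf ⟨∅, by simp⟩).1.2⟩
  have hsmall : ∀ x : P, ‖x‖ ≤ s → |f x| ≤ 1 := by
    intro x hx
    exact (hf ⟨{x}, by simpa using hx⟩).2 x (Finset.mem_singleton_self x)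
  have hnorm : ‖WeakDual.toStrongDual f‖ ≤ 1 / s := by
    refine ContinuousLinearMap.opNorm_le_bound _ (by positivity) fun x => ?_
    rcases eq_or_ne x 0 with rfl | hx0
    · simp
    · have hxpos : 0 < ‖x‖ := norm_pos_iff.2 hx0
      have key : |f ((s / ‖x‖) • x)| ≤ 1 := by
        refine hsmall _ ?_
        rw [norm_smul, Real.norm_eq_abs, abs_of_pos (by positivity)]
        rw [div_mul_cancel₀ _ hxpos.ne']
      have : f ((s / ‖x‖) • x) = (s / ‖x‖) * f x := by
        simpa using map_smul f (s / ‖x‖) x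
      rw [this, abs_mul, abs_of_pos (by positivity : (0:ℝ) < s / ‖x‖)] at key
      have : |f x| ≤ ‖x‖ / s := by
        rw [div_mul_eq_mul_div, div_le_one hxpos] at key
        rw [le_div_iff₀ hs]
        linarith
      calc ‖(WeakDual.toStrongDual f) x‖ = |f x| := rfl
      _ ≤ ‖x‖ / s := this
      _ = 1 / s * ‖x‖ := by ring
  exact absurd (hbound f hfDE) (not_lt.2 hnorm)

/-- Main separation lemma: a convex set with weak*-closed ball intersections, not containing
`0`, can be strictly separated from `0` by an evaluation functional. -/
lemma separation [CompleteSpace P] (D : Set (WeakDual ℝ P)) (hD : Convex ℝ D)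
    (hcl : ∀ r : ℝ, 0 < r → IsClosed (D ∩ dball P r)) (h0 : (0 : WeakDual ℝ P) ∉ D) :
    ∃ (x₀ : P) (α : ℝ), 0 < α ∧ ∀ f ∈ D, α < f x₀ := by
  classical
  -- Step A: a small ball avoiding D
  obtain ⟨r₀, hr₀, hr₀half, hAvoid⟩ :
      ∃ r₀ : ℝ, 0 < r₀ ∧ r₀ ≤ 1 ∧ ∀ f ∈ D, r₀ < ‖WeakDual.toStrongDual f‖ := by
    have h1 : IsClosed (D ∩ dball P 1) := hcl 1 one_pos
    have hS : IsClosed (StrongDual.toWeakDual ⁻¹' (D ∩ dball P 1) :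
        Set (StrongDual ℝ P)) :=
      h1.preimage NormedSpace.Dual.toWeakDual_continuous
    have h0S : (0 : StrongDual ℝ P) ∈ (StrongDual.toWeakDual ⁻¹' (D ∩ dball P 1))ᶜ := by
      intro h
      exact h0 h.1
    obtain ⟨ε, hε, hball⟩ := Metric.isOpen_iff.1 hS.isOpen_compl 0 h0S
    refine ⟨min (ε/2) (1/2), by positivity, by
      have := min_le_right (ε/2) (1/2); linarith, ?_⟩
    intro f hf
    by_contra hle
    push_neg at hle
    have hf1 : f ∈ D ∩ dball P 1 := by
      refine ⟨hf, mem_dball.2 ?_⟩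
      calc ‖WeakDual.toStrongDual f‖ ≤ min (ε/2) (1/2) := hle
      _ ≤ 1/2 := min_le_right _ _
      _ ≤ 1 := by norm_num
    have hmem : WeakDual.toStrongDual f ∈ Metric.ball (0 : StrongDual ℝ P) ε := by
      rw [mem_ball_zero_iff]
      calc ‖WeakDual.toStrongDual f‖ ≤ min (ε/2) (1/2) := hle
      _ ≤ ε/2 := min_le_left _ _
      _ < ε := by linarith
    exact hball hmem hf1
  -- Step B: the inductive construction of finite sets
  have step' : ∀ (n : ℕ) (E : Set (WeakDual ℝ P)), ∃ F : Finset P,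
      IsClosed E → (∀ f ∈ D ∩ E, ((n : ℝ) + 1) * r₀ < ‖WeakDual.toStrongDual f‖) →
      ((∀ x ∈ F, ‖x‖ ≤ 1 / (((n : ℝ) + 1) * r₀)) ∧
        ∀ f ∈ (D ∩ E) ∩ pol F, ((n : ℝ) + 2) * r₀ < ‖WeakDual.toStrongDual f‖) := by
    intro n E
    by_cases hE : IsClosed E
    · by_cases hb : ∀ f ∈ D ∩ E, ((n : ℝ) + 1) * r₀ < ‖WeakDual.toStrongDual f‖
      · have hs : (0:ℝ) < 1 / (((n : ℝ) + 1) * r₀) := by positivity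
        have hb' : ∀ f ∈ D ∩ E, 1 / (1 / (((n : ℝ) + 1) * r₀)) < ‖WeakDual.toStrongDual f‖ := by
          intro f hf
          rw [one_div_one_div]
          exact hb f hf
        obtain ⟨F, hF1, hF2⟩ := step D (R := ((n : ℝ) + 2) * r₀) (by positivity) hs
          (hcl _ (by positivity)) E hE hb'
        exact ⟨F, fun _ _ => ⟨hF1, hF2⟩⟩
      · exact ⟨∅, fun _ h => absurd h hb⟩
    · exact ⟨∅, fun h => absurd h hE⟩
  choose Fc hFc using step'
  let Efam : ℕ → Set (WeakDual ℝ P) := fun n =>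
    Nat.rec Set.univ (fun m Em => Em ∩ pol (Fc m Em)) n
  have hEsucc : ∀ n, Efam (n + 1) = Efam n ∩ pol (Fc n (Efam n)) := fun n => rfl
  set Ffam : ℕ → Finset P := fun n => Fc n (Efam n) with hFfam
  have Inv : ∀ n, IsClosed (Efam n) ∧
      ∀ f ∈ D ∩ Efam n, ((n : ℝ) + 1) * r₀ < ‖WeakDual.toStrongDual f‖ := by
    intro n
    induction n with
    | zero =>
      refine ⟨isClosed_univ, fun f hf => ?_⟩
      simpa using hAvoid f hf.1
    | succ n ih =>
      obtain ⟨hEc, hEb⟩ := ih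
      obtain ⟨hnorm, hbd⟩ := hFc n (Efam n) hEc hEb
      refine ⟨hEc.inter (isClosed_pol _), ?_⟩
      intro f hf
      rw [hEsucc n] at hf
      have : f ∈ (D ∩ Efam n) ∩ pol (Ffam n) := ⟨⟨hf.1, hf.2.1⟩, hf.2.2⟩
      have h2 := hbd f this
      push_cast
      calc ((n : ℝ) + 1 + 1) * r₀ = ((n : ℝ) + 2) * r₀ := by ring
      _ < ‖WeakDual.toStrongDual f‖ := h2
  have Fnorm : ∀ n, ∀ x ∈ Ffam n, ‖x‖ ≤ 1 / (((n : ℝ) + 1) * r₀) :=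
    fun n => (hFc n (Efam n) (Inv n).1 (Inv n).2).1
  have hEmem : ∀ (n : ℕ) (f : WeakDual ℝ P), (∀ k < n, f ∈ pol (Ffam k)) → f ∈ Efam n := by
    intro n
    induction n with
    | zero => intro f _; exact Set.mem_univ f
    | succ n ih =>
      intro f h
      rw [hEsucc n]
      exact ⟨ih f (fun k hk => h k (hk.trans (Nat.lt_succ_self n))), h n (Nat.lt_succ_self n)⟩
  have hHit : ∀ f ∈ D, ∃ n, ∃ x ∈ Ffam n, 1 < |f x| := by
    intro f hf
    by_contra hcon
    push_neg at hcon
    have hmem : ∀ n, f ∈ Efam n := by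
      intro n
      exact hEmem n f (fun k _ => fun x hx => hcon k x hx)
    obtain ⟨n, hn⟩ := exists_nat_gt (‖WeakDual.toStrongDual f‖ / r₀)
    have h1 : ‖WeakDual.toStrongDual f‖ < (n : ℝ) * r₀ := by
      rw [div_lt_iff₀ hr₀] at hn
      exact hn
    have h2 := (Inv n).2 f ⟨hf, hmem n⟩
    nlinarith [norm_nonneg (WeakDual.toStrongDual f)]
  -- Step C: embed into ℓ∞ and separate
  let ι : Type _ := Σ n : ℕ, {x : P // x ∈ Ffam n}
  let xi : ι → P := fun i => i.2.1
  have hxi_le : ∀ i : ι, ‖xi i‖ ≤ 1 / (((i.1 : ℝ) + 1) * r₀) := fun i => Fnorm i.1 _ i.2.2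
  have hxi1 : ∀ i : ι, ‖xi i‖ ≤ 1 / r₀ := by
    intro i
    refine (hxi_le i).trans ?_
    apply one_div_le_one_div_of_le hr₀
    nlinarith [Nat.cast_nonneg (α := ℝ) i.1]
  have hmem : ∀ f : WeakDual ℝ P, Memℓp (fun i : ι => f (xi i)) ∞ := by
    intro f
    apply memℓp_infty
    refine ⟨‖WeakDual.toStrongDual f‖ * (1 / r₀), ?_⟩
    rintro - ⟨i, rfl⟩
    calc ‖f (xi i)‖ ≤ ‖WeakDual.toStrongDual f‖ * ‖xi i‖ :=
          ContinuousLinearMap.le_opNorm _ _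
    _ ≤ ‖WeakDual.toStrongDual f‖ * (1 / r₀) :=
          mul_le_mul_of_nonneg_left (hxi1 i) (norm_nonneg _)
  let T : WeakDual ℝ P → lp (fun _ : ι => ℝ) ∞ := fun f => ⟨fun i => f (xi i), hmem f⟩
  have hT_apply : ∀ (f : WeakDual ℝ P) (i : ι), (T f : ∀ _ : ι, ℝ) i = f (xi i) :=
    fun f i => rfl
  have hfin : ∀ (f : WeakDual ℝ P) (ε : ℝ), 0 < ε → {i : ι | ε ≤ |f (xi i)|}.Finite := by
    intro f ε hε
    obtain ⟨N, hN⟩ := exists_nat_gt (‖WeakDual.toStrongDual f‖ / (ε * r₀))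
    have hsub : {i : ι | ε ≤ |f (xi i)|} ⊆ ⋃ n ∈ Set.Iio N, {i : ι | i.1 = n} := by
      intro i hi
      simp only [Set.mem_setOf_eq] at hi
      simp only [Set.mem_iUnion, Set.mem_setOf_eq, Set.mem_Iio, exists_prop]
      refine ⟨i.1, ?_, rfl⟩
      by_contra hge
      push_neg at hge
      have hNi : (N : ℝ) ≤ (i.1 : ℝ) := Nat.cast_le.2 hge
      have hfn : ‖WeakDual.toStrongDual f‖ < ((i.1 : ℝ) + 1) * (ε * r₀) := by
        rw [div_lt_iff₀ (by positivity)] at hN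
        nlinarith [mul_pos hε hr₀]
      have hbig : |f (xi i)| < ε := by
        have h1 : |f (xi i)| ≤ ‖WeakDual.toStrongDual f‖ * ‖xi i‖ := by
          rw [← Real.norm_eq_abs]
          exact ContinuousLinearMap.le_opNorm _ _
        have h2 : ‖WeakDual.toStrongDual f‖ * ‖xi i‖ ≤
            ‖WeakDual.toStrongDual f‖ * (1 / (((i.1 : ℝ) + 1) * r₀)) :=
          mul_le_mul_of_nonneg_left (hxi_le i) (norm_nonneg _)
        have h3 : ‖WeakDual.toStrongDual f‖ * (1 / (((i.1 : ℝ) + 1) * r₀)) < ε := by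
          rw [mul_one_div, div_lt_iff₀ (by positivity)]
          nlinarith
        linarith
      linarith
    refine Set.Finite.subset (Set.Finite.biUnion (Set.finite_Iio N) fun n _ => ?_) hsub
    have hsub2 : {i : ι | i.1 = n} ⊆
        Set.range (fun x : {x : P // x ∈ Ffam n} => (⟨n, x⟩ : ι)) := by
      rintro ⟨m, x⟩ hm
      simp only [Set.mem_setOf_eq] at hm
      subst hm
      exact ⟨x, rfl⟩
    exact (Set.finite_range _).subset hsub2
  have Tconv : Convex ℝ (T '' D) := by
    rintro - ⟨f, hf, rfl⟩ - ⟨g, hg, rfl⟩ c d hc hd hcd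
    refine ⟨c • f + d • g, hD hf hg hc hd hcd, ?_⟩
    apply lp.ext
    funext i
    simp only [hT_apply, lp.coeFn_add, Pi.add_apply, lp.coeFn_smul, Pi.smul_apply, hT_apply,
      smul_eq_mul]
    rfl
  have himg : T '' D ⊆ {y : lp (fun _ : ι => ℝ) ∞ | 1 ≤ ‖y‖} := by
    rintro - ⟨f, hf, rfl⟩
    obtain ⟨n, x, hx, h1⟩ := hHit f hf
    have h2 : (1:ℝ) < |(T f : ∀ _ : ι, ℝ) ⟨n, ⟨x, hx⟩⟩| := h1
    calc (1:ℝ) ≤ ‖(T f : ∀ _ : ι, ℝ) ⟨n, ⟨x, hx⟩⟩‖ := by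
          rw [Real.norm_eq_abs]; exact h2.le
    _ ≤ ‖T f‖ := lp.norm_apply_le_norm ENNReal.top_ne_zero (T f) _
  have h0cl : (0 : lp (fun _ : ι => ℝ) ∞) ∉ closure (T '' D) := by
    intro h
    have hsub : closure (T '' D) ⊆ {y : lp (fun _ : ι => ℝ) ∞ | 1 ≤ ‖y‖} :=
      closure_minimal himg (isClosed_le continuous_const continuous_norm)
    have h2 := hsub h
    simp only [Set.mem_setOf_eq, norm_zero] at h2
    linarith
  obtain ⟨g, u, hu0, hgt⟩ :=
    geometric_hahn_banach_point_closed Tconv.closure isClosed_closure h0cl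
  rw [map_zero] at hu0
  set a : ι → ℝ := fun i => g (lp.single ∞ i 1) with ha
  have habs : ∀ s : Finset ι, ∑ i ∈ s, |a i| ≤ ‖g‖ := by
    intro s
    set y : lp (fun _ : ι => ℝ) ∞ :=
      ∑ i ∈ s, (if 0 ≤ a i then (1:ℝ) else -1) • lp.single ∞ i (1:ℝ) with hy
    have hgy : g y = ∑ i ∈ s, |a i| := by
      rw [hy, map_sum]
      refine Finset.sum_congr rfl fun i _ => ?_
      rw [map_smul, smul_eq_mul]
      by_cases h : 0 ≤ a i
      · rw [if_pos h, one_mul, abs_of_nonneg h]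
      · rw [if_neg h, neg_one_mul, abs_of_neg (lt_of_not_ge h), ha]
    have hynorm : ‖y‖ ≤ 1 := by
      apply lp.norm_le_of_forall_le zero_le_one
      intro j
      rw [hy]
      have hco : (↑(∑ i ∈ s, (if 0 ≤ a i then (1:ℝ) else -1) • lp.single ∞ i (1:ℝ)) :
          ∀ _ : ι, ℝ) j
          = ∑ i ∈ s, (if 0 ≤ a i then (1:ℝ) else -1) * (lp.single ∞ i (1:ℝ) : ∀ _ : ι, ℝ) j := by
        rw [lp.coeFn_sum, Finset.sum_apply]
        refine Finset.sum_congr rfl fun i _ => ?_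
        rw [lp.coeFn_smul, Pi.smul_apply, smul_eq_mul]
      rw [hco]
      by_cases hj : j ∈ s
      · rw [Finset.sum_eq_single j]
        · rw [lp.single_apply_self]
          split_ifs <;> norm_num
        · intro i _ hij
          rw [lp.single_apply_ne _ _ _ (Ne.symm hij), mul_zero]
        · intro h; exact absurd hj h
      · rw [Finset.sum_eq_zero]
        · norm_num
        · intro i hi
          have : j ≠ i := fun h => hj (h ▸ hi)
          rw [lp.single_apply_ne _ _ _ this, mul_zero]
    calc ∑ i ∈ s, |a i| = g y := hgy.symm
    _ ≤ |g y| := le_abs_self _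
    _ ≤ ‖g‖ * ‖y‖ := by rw [← Real.norm_eq_abs]; exact g.le_opNorm y
    _ ≤ ‖g‖ * 1 := mul_le_mul_of_nonneg_left hynorm (norm_nonneg _)
    _ = ‖g‖ := mul_one _
  have hsum_abs : Summable (fun i => |a i|) :=
    summable_of_sum_le (fun i => abs_nonneg _) habs
  have hsum_ax : Summable (fun i : ι => a i • xi i) := by
    apply Summable.of_norm_bounded (g := fun i => |a i| * (1 / r₀)) (hsum_abs.mul_right _)
    intro i
    rw [norm_smul, Real.norm_eq_abs]
    exact mul_le_mul_of_nonneg_left (hxi1 i) (abs_nonneg _)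
  set x₀ : P := ∑' i, a i • xi i with hx₀
  have hTf_sum : ∀ f : WeakDual ℝ P,
      HasSum (fun i : ι => f (xi i) • lp.single ∞ i (1:ℝ)) (T f) := by
    intro f
    have : Nonempty (Finset ι) := ⟨∅⟩
    rw [HasSum, SummationFilter.unconditional_filter, Metric.tendsto_atTop]
    intro ε hε
    refine ⟨(hfin f (ε/2) (by linarith)).toFinset, fun s hs => ?_⟩
    rw [dist_eq_norm]
    have hle : ‖(∑ i ∈ s, f (xi i) • lp.single ∞ i (1:ℝ)) - T f‖ ≤ ε/2 := by
      apply lp.norm_le_of_forall_le (by linarith)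
      intro j
      have hco : (↑((∑ i ∈ s, f (xi i) • lp.single ∞ i (1:ℝ)) - T f) : ∀ _ : ι, ℝ) j
          = (∑ i ∈ s, f (xi i) * (lp.single ∞ i (1:ℝ) : ∀ _ : ι, ℝ) j) - f (xi j) := by
        rw [lp.coeFn_sub, Pi.sub_apply, lp.coeFn_sum, Finset.sum_apply, hT_apply]
        refine congrArg (· - f (xi j)) ?_
        refine Finset.sum_congr rfl fun i _ => ?_
        rw [lp.coeFn_smul, Pi.smul_apply, smul_eq_mul]
      rw [hco]
      by_cases hj : j ∈ s
      · rw [Finset.sum_eq_single j]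
        · rw [lp.single_apply_self, mul_one, sub_self, norm_zero]
          linarith
        · intro i _ hij
          rw [lp.single_apply_ne _ _ _ (Ne.symm hij), mul_zero]
        · intro h; exact absurd hj h
      · rw [Finset.sum_eq_zero, zero_sub, norm_neg, Real.norm_eq_abs]
        · have hjn : j ∉ (hfin f (ε/2) (by linarith)).toFinset := fun h => hj (hs h)
          rw [Set.Finite.mem_toFinset] at hjn
          simp only [Set.mem_setOf_eq, not_le] at hjn
          linarith
        · intro i hi
          have : j ≠ i := fun h => hj (h ▸ hi)
          rw [lp.single_apply_ne _ _ _ this, mul_zero]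
    linarith
  have hrep : ∀ f : WeakDual ℝ P, f x₀ = g (T f) := by
    intro f
    have h1 : HasSum (fun i : ι => f (xi i) * a i) (g (T f)) := by
      have h := (hTf_sum f).mapL g
      simp only [map_smul, smul_eq_mul] at h
      exact h
    have h2 : HasSum (fun i : ι => (WeakDual.toStrongDual f) (a i • xi i))
        ((WeakDual.toStrongDual f) x₀) := hsum_ax.hasSum.mapL _
    have h2' : HasSum (fun i : ι => f (xi i) * a i) (f x₀) := by
      have heq : (fun i : ι => (WeakDual.toStrongDual f) (a i • xi i))
          = fun i : ι => f (xi i) * a i := by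
        funext i
        rw [map_smul, smul_eq_mul, mul_comm]
        rfl
      rw [heq] at h2
      exact h2
    exact h2'.unique h1
  refine ⟨x₀, u, hu0, fun f hf => ?_⟩
  have h := hgt _ (subset_closure ⟨f, hf, rfl⟩)
  rw [hrep f]
  exact h

end KreinSmulianAux


/-- The weak-star topology on the norm dual of `P`. -/
noncomputable def weakStarTop (P : Type*) [NormedAddCommGroup P] [NormedSpace ℝ P] :
    TopologicalSpace (StrongDual ℝ P) :=
  inferInstanceAs (TopologicalSpace (WeakDual ℝ P))

/-- **Krein–Smulian**: a convex set in the dual of a Banach space is weak*-closed iff its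
intersection with every closed ball is weak*-closed. -/
theorem kreinSmulian {P : Type*} [NormedAddCommGroup P] [NormedSpace ℝ P] [CompleteSpace P]
    (C : Set (StrongDual ℝ P)) (hC : Convex ℝ C) :
    IsClosed[weakStarTop P] C ↔
      ∀ r : ℝ, 0 < r → IsClosed[weakStarTop P] (C ∩ Metric.closedBall 0 r) := by
  have hinst : weakStarTop P = (inferInstance : TopologicalSpace (WeakDual ℝ P)) := rfl
  constructor
  · intro h r _
    exact @IsClosed.inter (WeakDual ℝ P) _ _ _ h (WeakDual.isClosed_closedBall 0 r)
  · intro hcl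
    show @IsClosed (WeakDual ℝ P) _ C
    rw [← isOpen_compl_iff (X := WeakDual ℝ P) (s := C), @isOpen_iff_mem_nhds (WeakDual ℝ P)]
    intro φ hφ
    set D : Set (WeakDual ℝ P) := (fun f : WeakDual ℝ P => f + φ) ⁻¹' C with hD
    have hDconv : Convex ℝ D := by
      intro f hf g hg a b ha hb hab
      have key : a • f + b • g + φ = a • (f + φ) + b • (g + φ) := by
        have h2 : a • φ + b • φ = φ := by rw [← add_smul, hab, one_smul]
        calc a • f + b • g + φ = a • f + b • g + (a • φ + b • φ) := by rw [h2]
        _ = a • f + a • φ + (b • g + b • φ) := by abel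
        _ = a • (f + φ) + b • (g + φ) := by rw [smul_add, smul_add]
      show a • f + b • g + φ ∈ C
      rw [key]
      exact hC hf hg ha hb hab
    have h0D : (0 : WeakDual ℝ P) ∉ D := fun h => hφ (by
      have h' : (0 : WeakDual ℝ P) + φ ∈ C := h
      rwa [zero_add] at h')
    have hDcl : ∀ r : ℝ, 0 < r → IsClosed (D ∩ KreinSmulianAux.dball P r) := by
      intro r hr
      have hC2 : @IsClosed (WeakDual ℝ P) _
          ((C ∩ Metric.closedBall 0 (r + ‖WeakDual.toStrongDual φ‖) :
            Set (StrongDual ℝ P))) :=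
        hcl _ (by positivity)
      have hkey : D ∩ KreinSmulianAux.dball P r = (fun f : WeakDual ℝ P => f + φ) ⁻¹'
          ((C ∩ Metric.closedBall 0 (r + ‖WeakDual.toStrongDual φ‖) :
              Set (StrongDual ℝ P)) ∩
            WeakDual.toStrongDual ⁻¹'
              Metric.closedBall (WeakDual.toStrongDual φ) r) := by
        ext f
        constructor
        · rintro ⟨hfC, hfb⟩
          rw [KreinSmulianAux.mem_dball] at hfb
          refine ⟨⟨hfC, ?_⟩, ?_⟩
          · show WeakDual.toStrongDual (f + φ) ∈
              Metric.closedBall 0 (r + ‖WeakDual.toStrongDual φ‖)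
            rw [mem_closedBall_zero_iff, map_add]
            exact (norm_add_le _ _).trans (by linarith)
          · show WeakDual.toStrongDual (f + φ) ∈
              Metric.closedBall (WeakDual.toStrongDual φ) r
            rw [Metric.mem_closedBall, dist_eq_norm, map_add, add_sub_cancel_right]
            exact hfb
        · rintro ⟨⟨hfC, _⟩, hfb⟩
          refine ⟨hfC, ?_⟩
          rw [KreinSmulianAux.mem_dball]
          have : WeakDual.toStrongDual (f + φ) ∈
              Metric.closedBall (WeakDual.toStrongDual φ) r := hfb
          rw [Metric.mem_closedBall, dist_eq_norm, map_add, add_sub_cancel_right] at this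
          exact this
      rw [hkey]
      exact (hC2.inter (WeakDual.isClosed_closedBall _ r)).preimage
        (continuous_id.add continuous_const)
    obtain ⟨x₀, α, hα, hsep⟩ := KreinSmulianAux.separation D hDconv hDcl h0D
    have hUopen : IsOpen {h : WeakDual ℝ P | h x₀ - φ x₀ < α} :=
      isOpen_lt ((WeakDual.eval_continuous x₀).sub continuous_const) continuous_const
    refine Filter.mem_of_superset (hUopen.mem_nhds ?_) ?_
    · show φ x₀ - φ x₀ < α
      simpa using hα
    · intro h hh hC'
      have hmem : (h - φ) ∈ D := by
        show h - φ + φ ∈ C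
        rw [sub_add_cancel]
        exact hC'
      have h1 := hsep _ hmem
      have h2 : (h - φ) x₀ = h x₀ - φ x₀ := rfl
      rw [h2] at h1
      have hh' : h x₀ - φ x₀ < α := hh
      linarith
end

section
/- Let P be a real Banach space. Every linear functional on P* that is continuous on norm-bounded subsets of P* for the Mackey topology m(P*, P) is m(P*, P)-continuous on all of P*, i.e., is given by evaluation at an element of P. -/
open Topology

/-- The weak topology on a normed space `Y`, i.e. `w(Y, Y*)`. -/
noncomputable def weakTop (Y : Type*) [NormedAddCommGroup Y] [NormedSpace ℝ Y] :
    TopologicalSpace Y :=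
  inferInstanceAs (TopologicalSpace (WeakSpace ℝ Y))

/-- The Mackey topology `m(P*, P)` on the norm dual of `P`: the topology of uniform convergence
on weakly compact, convex, balanced (circled) subsets of `P`. -/
noncomputable def mackeyTop (P : Type*) [NormedAddCommGroup P] [NormedSpace ℝ P] :
    TopologicalSpace (StrongDual ℝ P) :=
  TopologicalSpace.induced
    (fun f => UniformOnFun.ofFun
      {K : Set P | @IsCompact P (weakTop P) K ∧ Convex ℝ K ∧ Balanced ℝ K} (f : P → ℝ))
    inferInstance

open Set Metric Filter NormedSpace Pointwise

section helpers

instance wsSMul {P : Type*} [NormedAddCommGroup P] [NormedSpace ℝ P] :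
    ContinuousSMul ℝ (WeakSpace ℝ P) :=
  inferInstanceAs (ContinuousSMul ℝ (WeakBilin ((topDualPairing ℝ P).flip)))

instance wdSMul {P : Type*} [NormedAddCommGroup P] [NormedSpace ℝ P] :
    ContinuousSMul ℝ (WeakDual ℝ P) :=
  inferInstanceAs (ContinuousSMul ℝ (WeakBilin (topDualPairing ℝ P)))

instance wdLCS {P : Type*} [NormedAddCommGroup P] [NormedSpace ℝ P] :
    LocallyConvexSpace ℝ (WeakDual ℝ P) :=
  inferInstanceAs (LocallyConvexSpace ℝ (WeakBilin (topDualPairing ℝ P)))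

lemma isCompact_convexJoin {E : Type*} [AddCommGroup E] [Module ℝ E] [TopologicalSpace E]
    [ContinuousAdd E] [ContinuousSMul ℝ E] {s t : Set E}
    (hs : IsCompact s) (ht : IsCompact t) : IsCompact (convexJoin ℝ s t) := by
  have hEq : convexJoin ℝ s t =
      (fun p : ℝ × E × E => (1 - p.1) • p.2.1 + p.1 • p.2.2) '' (Icc (0:ℝ) 1 ×ˢ s ×ˢ t) := by
    ext z
    constructor
    · intro hz
      obtain ⟨a, ha, b, hb, hzs⟩ := mem_convexJoin.mp hz
      rw [segment_eq_image ℝ a b] at hzs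
      obtain ⟨θ, hθ, rfl⟩ := hzs
      exact ⟨⟨θ, a, b⟩, ⟨hθ, ha, hb⟩, rfl⟩
    · rintro ⟨⟨θ, a, b⟩, ⟨hθ, ha, hb⟩, rfl⟩
      exact mem_convexJoin.mpr ⟨a, ha, b, hb,
        (segment_eq_image ℝ a b) ▸ mem_image_of_mem _ hθ⟩
  rw [hEq]
  exact (isCompact_Icc.prod (hs.prod ht)).image <|
    ((continuous_const.sub continuous_fst).smul (continuous_fst.comp continuous_snd)).add
      (continuous_fst.smul (continuous_snd.comp continuous_snd))

lemma balanced_convexJoin {E : Type*} [AddCommGroup E] [Module ℝ E] {s t : Set E}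
    (hs : Balanced ℝ s) (ht : Balanced ℝ t) : Balanced ℝ (convexJoin ℝ s t) := by
  intro a ha
  rintro z ⟨y, hy, rfl⟩
  obtain ⟨x₁, h₁, x₂, h₂, hyseg⟩ := mem_convexJoin.mp hy
  rw [segment_eq_image₂] at hyseg
  obtain ⟨⟨c, d⟩, ⟨hc, hd, hcd⟩, rfl⟩ := hyseg
  refine mem_convexJoin.mpr ⟨a • x₁, hs a ha (smul_mem_smul_set h₁),
    a • x₂, ht a ha (smul_mem_smul_set h₂), ?_⟩
  rw [segment_eq_image₂]
  refine ⟨⟨c, d⟩, ⟨hc, hd, hcd⟩, ?_⟩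
  simp only [smul_add, smul_comm a c, smul_comm a d]

variable {P : Type*} [NormedAddCommGroup P] [NormedSpace ℝ P]

lemma zero_mem_of_balanced {K : Set P} (hb : Balanced ℝ K) (hne : K.Nonempty) : (0 : P) ∈ K := by
  obtain ⟨y, hy⟩ := hne
  have := hb 0 (by norm_num) (smul_mem_smul_set (a := (0:ℝ)) hy)
  simpa using this

lemma singleton_zero_mem_fam :
    {0} ∈ {K : Set P | @IsCompact P (weakTop P) K ∧ Convex ℝ K ∧ Balanced ℝ K} := by
  refine ⟨@isCompact_singleton P (weakTop P) 0, convex_singleton 0, ?_⟩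
  intro a ha
  rintro z ⟨y, hy, rfl⟩
  simp only [mem_singleton_iff] at hy ⊢
  simp [hy]

lemma fam_directed :
    DirectedOn (· ⊆ ·) {K : Set P | @IsCompact P (weakTop P) K ∧ Convex ℝ K ∧ Balanced ℝ K} := by
  rintro K₁ ⟨hc₁, hv₁, hb₁⟩ K₂ ⟨hc₂, hv₂, hb₂⟩
  rcases K₁.eq_empty_or_nonempty with rfl | hne₁
  · exact ⟨K₂, ⟨hc₂, hv₂, hb₂⟩, empty_subset _, subset_rfl⟩
  rcases K₂.eq_empty_or_nonempty with rfl | hne₂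
  · exact ⟨K₁, ⟨hc₁, hv₁, hb₁⟩, subset_rfl, empty_subset _⟩
  refine ⟨convexJoin ℝ K₁ K₂, ⟨?_, hv₁.convexJoin hv₂, balanced_convexJoin hb₁ hb₂⟩, ?_, ?_⟩
  · exact isCompact_convexJoin (E := WeakSpace ℝ P) hc₁ hc₂
  · intro x hx
    obtain ⟨y, hy⟩ := hne₂
    exact mem_convexJoin.mpr ⟨x, hx, y, hy, left_mem_segment ℝ x y⟩
  · intro y hy
    obtain ⟨x, hx⟩ := hne₁
    exact mem_convexJoin.mpr ⟨x, hx, y, hy, right_mem_segment ℝ x y⟩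

lemma bound_of_weak_compact {K : Set P} (hK : @IsCompact P (weakTop P) K) :
    ∃ C : ℝ, 0 < C ∧ ∀ x ∈ K, ‖x‖ ≤ C := by
  have key : ∀ f : StrongDual ℝ P, ∃ C, ∀ i : K,
      ‖(NormedSpace.inclusionInDoubleDual ℝ P i) f‖ ≤ C := by
    intro f
    have hf : @Continuous P ℝ (weakTop P) _ fun x => f x :=
      WeakBilin.eval_continuous ((topDualPairing ℝ P).flip) f
    have himg : IsCompact ((fun x : P => f x) '' K) :=
      @IsCompact.image P ℝ (weakTop P) _ _ _ hK hf
    obtain ⟨C, hC⟩ := Bornology.IsBounded.exists_norm_le himg.isBounded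
    exact ⟨C, fun i => by
      rw [NormedSpace.dual_def]
      exact hC _ (mem_image_of_mem _ i.2)⟩
  obtain ⟨C', hC'⟩ := banach_steinhaus key
  refine ⟨max C' 1, lt_of_lt_of_le one_pos (le_max_right _ _), fun x hx => ?_⟩
  have := hC' ⟨x, hx⟩
  rw [show inclusionInDoubleDual ℝ P x = inclusionInDoubleDualLi ℝ x from rfl,
    (inclusionInDoubleDualLi ℝ (E := P)).norm_map x] at this
  exact this.trans (le_max_left _ _)


lemma mackey_nhds_elim {U : Set (StrongDual ℝ P)} (hU : U ∈ @nhds _ (mackeyTop P) 0) :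
    ∃ K, (@IsCompact P (weakTop P) K ∧ Convex ℝ K ∧ Balanced ℝ K) ∧ (0:P) ∈ K ∧
      ∃ ε > 0, ∀ f : StrongDual ℝ P, (∀ x ∈ K, |f x| < ε) → f ∈ U := by
  unfold mackeyTop at hU
  rw [nhds_induced] at hU
  obtain ⟨V, hV, hFV⟩ := Filter.mem_comap.mp hU
  obtain ⟨⟨K, W⟩, ⟨hK, hW⟩, hsub⟩ :=
    (UniformOnFun.hasBasis_nhds P ℝ _ _ ⟨{0}, singleton_zero_mem_fam⟩ fam_directed).mem_iff.mp hV
  obtain ⟨ε, hε, hdist⟩ := Metric.mem_uniformity_dist.mp hW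
  have main : ∀ f : StrongDual ℝ P, (∀ x ∈ K, |f x| < ε) → f ∈ U := by
    intro f hf
    apply hFV
    apply hsub
    intro x hx
    refine hdist ?_
    simp only [UniformOnFun.toFun_ofFun, ContinuousLinearMap.zero_apply, Real.dist_eq, sub_zero]
    exact hf x hx
  rcases K.eq_empty_or_nonempty with rfl | hne
  · exact ⟨{0}, singleton_zero_mem_fam, mem_singleton 0, ε, hε,
      fun f _ => main f (fun x hx => absurd hx (notMem_empty x))⟩
  · exact ⟨K, hK, zero_mem_of_balanced hK.2.2 hne, ε, hε, main⟩

lemma extract (φ : StrongDual ℝ P →ₗ[ℝ] ℝ) (r : ℝ) (hr : 0 < r)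
    (hc : @ContinuousOn _ _ (mackeyTop P) _ φ (Metric.closedBall 0 r)) :
    ∃ K, (@IsCompact P (weakTop P) K ∧ Convex ℝ K ∧ Balanced ℝ K) ∧ (0:P) ∈ K ∧
      ∃ ε > 0, ∀ f : StrongDual ℝ P, (∀ x ∈ K, |f x| < ε) → ‖f‖ ≤ r → |φ f| < 1 := by
  have hcw : Filter.Tendsto φ
      (@nhdsWithin _ (mackeyTop P) 0 (Metric.closedBall 0 r)) (nhds (φ 0)) :=
    hc 0 (Metric.mem_closedBall_self hr.le)
  rw [map_zero] at hcw
  have hmem : φ ⁻¹' (Metric.ball (0:ℝ) 1) ∈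
      @nhdsWithin _ (mackeyTop P) 0 (Metric.closedBall 0 r) :=
    hcw (Metric.ball_mem_nhds 0 one_pos)
  obtain ⟨U, hU, hUsub⟩ :=
    (@mem_nhdsWithin_iff_exists_mem_nhds_inter _ (mackeyTop P) _ _ _).mp hmem
  obtain ⟨K, hK, hK0, ε, hε, hcond⟩ := mackey_nhds_elim hU
  refine ⟨K, hK, hK0, ε, hε, fun f hfK hfr => ?_⟩
  have : f ∈ φ ⁻¹' (Metric.ball (0:ℝ) 1) :=
    hUsub ⟨hcond f hfK, mem_closedBall_zero_iff.mpr hfr⟩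
  simpa [Real.norm_eq_abs] using mem_ball_zero_iff.mp this

lemma weakDual_dual_eval {Y : Type*} [NormedAddCommGroup Y] [NormedSpace ℝ Y]
    (F : WeakDual ℝ Y →L[ℝ] ℝ) : ∃ y : Y, ∀ ψ : WeakDual ℝ Y, F ψ = ψ y := by
  classical
  haveI : Nonempty Y := ⟨0⟩
  have hb := (LinearMap.weakBilin_withSeminorms (topDualPairing ℝ Y)).hasBasis_zero_ball
  have h1 : F ⁻¹' (Metric.ball (0:ℝ) 1) ∈ nhds (0 : WeakDual ℝ Y) := by
    have h2 := F.continuous.tendsto 0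
    rw [map_zero] at h2
    exact h2 (Metric.ball_mem_nhds 0 one_pos)
  obtain ⟨⟨s, ρ⟩, hρ, hsub⟩ := hb.mem_iff.mp h1
  let L : ↥s → (WeakDual ℝ Y →ₗ[ℝ] ℝ) :=
    fun i => ((topDualPairing ℝ Y).flip (i : Y) : WeakDual ℝ Y →ₗ[ℝ] ℝ)
  have hLapp : ∀ (i : ↥s) (ψ : WeakDual ℝ Y), L i ψ = ψ (i : Y) := fun _ _ => rfl
  have hker : ⨅ i : ↥s, LinearMap.ker (L i) ≤
      LinearMap.ker (F : WeakDual ℝ Y →ₗ[ℝ] ℝ) := by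
    intro ψ hψ
    have hz : ∀ i : ↥s, ψ (i : Y) = 0 := by
      intro i
      have := (Submodule.mem_iInf _).mp hψ i
      rwa [LinearMap.mem_ker, hLapp] at this
    rw [LinearMap.mem_ker]
    by_contra hFψ
    have hpos : 0 < |F ψ| := abs_pos.mpr hFψ
    set t : ℝ := 2 / |F ψ| with ht
    have htpos : 0 < t := by positivity
    have htmem : (t • ψ : StrongDual ℝ Y) ∈
        (s.sup ((topDualPairing ℝ Y).toSeminormFamily)).ball 0 ρ := by
      refine (Seminorm.mem_ball_zero (p := s.sup ((topDualPairing ℝ Y).toSeminormFamily))).mpr ?_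
      refine Seminorm.finset_sup_apply_lt hρ ?_
      intro i hi
      have h0 : ψ i = 0 := hz ⟨i, hi⟩
      change ‖t * ψ i‖ < ρ
      rw [Real.norm_eq_abs, abs_mul]
      show |t| * |ψ i| < ρ
      rw [h0]
      simpa using hρ
    have hlt : ‖F (t • ψ)‖ < 1 := mem_ball_zero_iff.mp (hsub htmem)
    simp only [mem_preimage, mem_ball_zero_iff, Real.norm_eq_abs, map_smul,
      smul_eq_mul, abs_mul] at hlt
    rw [abs_of_pos htpos, ht, div_mul_cancel₀ 2 (ne_of_gt hpos)] at hlt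
    norm_num at hlt
  have hspan := mem_span_of_iInf_ker_le_ker (L := L) hker
  rw [Submodule.mem_span_range_iff_exists_fun] at hspan
  obtain ⟨c, hc⟩ := hspan
  refine ⟨∑ i : ↥s, c i • (i : Y), fun ψ => ?_⟩
  have h2 : F ψ = (∑ i : ↥s, c i • L i) ψ := by
    have h3 := LinearMap.congr_fun hc ψ
    simpa using h3.symm
  rw [h2]
  rw [LinearMap.sum_apply]
  rw [map_sum ψ]
  congr 1
  ext i
  rw [LinearMap.smul_apply, hLapp, map_smul]
set_option maxHeartbeats 2000000 in
lemma approx (φ : StrongDual ℝ P →ₗ[ℝ] ℝ)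
    (h : ∀ r : ℝ, 0 < r → @ContinuousOn _ _ (mackeyTop P) _ φ (Metric.closedBall 0 r))
    (φ' : StrongDual ℝ (StrongDual ℝ P)) (hφ' : ∀ f, φ' f = φ f)
    {δ : ℝ} (hδ : 0 < δ) :
    ∃ x : P, ‖φ' - inclusionInDoubleDual ℝ P x‖ ≤ δ := by
  obtain ⟨K, ⟨hKc, hKv, hKb⟩, hK0, ε, hε, hcond⟩ :=
    extract φ δ⁻¹ (by positivity) (h δ⁻¹ (by positivity))
  let ιL : P →ₗ[ℝ] WeakDual ℝ (StrongDual ℝ P) :=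
    (StrongDual.toWeakDual.toLinearMap).comp
      ((inclusionInDoubleDual ℝ P : P →L[ℝ] _) : P →ₗ[ℝ] _)
  have hι : Continuous fun x : WeakSpace ℝ P => ιL x :=
    WeakDual.continuous_of_continuous_eval
      (fun f => WeakBilin.eval_continuous ((topDualPairing ℝ P).flip) f)
  have hA : IsCompact (ιL '' K) := @IsCompact.image P _ (weakTop P) _ _ _ hKc hι
  set Bs : Set (WeakDual ℝ (StrongDual ℝ P)) :=
    ⇑WeakDual.toStrongDual ⁻¹' Metric.closedBall 0 δ with hBsdef
  have hBs : IsCompact Bs := WeakDual.isCompact_closedBall 0 δ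
  set D : Set (WeakDual ℝ (StrongDual ℝ P)) := ε⁻¹ • (ιL '' K) + Bs with hDdef
  have hDcompact : IsCompact D := (IsCompact.smul ε⁻¹ hA).add hBs
  have hBconv : Convex ℝ Bs :=
    (convex_closedBall (0 : StrongDual ℝ (StrongDual ℝ P)) δ).linear_preimage
      (WeakDual.toStrongDual.toLinearMap)
  have hDconvex : Convex ℝ D := Convex.add ((hKv.linear_image ιL).smul ε⁻¹) hBconv
  have h0A : (0 : WeakDual ℝ (StrongDual ℝ P)) ∈ ε⁻¹ • (ιL '' K) := by
    have := smul_mem_smul_set (a := ε⁻¹) (mem_image_of_mem ιL hK0)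
    rwa [map_zero, smul_zero] at this
  have h0B : (0 : WeakDual ℝ (StrongDual ℝ P)) ∈ Bs := by
    simp only [hBsdef, mem_preimage, map_zero]
    exact mem_closedBall_self hδ.le
  have h0D : (0 : WeakDual ℝ (StrongDual ℝ P)) ∈ D := by
    have := add_mem_add h0A h0B
    rwa [add_zero] at this
  have hmem : StrongDual.toWeakDual φ' ∈ D := by
    by_contra hnot
    obtain ⟨F, u, hFD, hFφ⟩ :=
      geometric_hahn_banach_closed_point hDconvex hDcompact.isClosed hnot
    have hu : 0 < u := by
      have := hFD 0 h0D
      simpa using this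
    obtain ⟨f₀, hf₀⟩ := weakDual_dual_eval F
    set g : StrongDual ℝ P := u⁻¹ • f₀ with hgdef
    have hgen : ∀ x ∈ K, g x < ε := by
      intro x hx
      have hmemD : ε⁻¹ • ιL x ∈ D := by
        have := add_mem_add (smul_mem_smul_set (a := ε⁻¹) (mem_image_of_mem ιL hx)) h0B
        rwa [add_zero] at this
      have hlt := hFD _ hmemD
      rw [hf₀] at hlt
      have hval : (ε⁻¹ • ιL x : WeakDual ℝ (StrongDual ℝ P)) f₀ = ε⁻¹ * f₀ x := rfl
      rw [hval] at hlt
      have h3 : f₀ x < ε * u := by rwa [inv_mul_lt_iff₀ hε] at hlt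
      have : g x = u⁻¹ * f₀ x := rfl
      rw [this, inv_mul_lt_iff₀ hu]
      linarith [mul_comm ε u]
    have hgK : ∀ x ∈ K, |g x| < ε := by
      intro x hx
      have h1 := hgen x hx
      have h2 := hgen (-x) (hKb.neg_mem_iff.mpr hx)
      rw [map_neg] at h2
      exact abs_lt.mpr ⟨by linarith, h1⟩
    have hgnorm : ‖g‖ ≤ δ⁻¹ := by
      obtain ⟨ψ, hψ1, hψeq⟩ := exists_dual_vector'' ℝ g
      have hmemB : StrongDual.toWeakDual (δ • ψ) ∈ Bs := by
        simp only [hBsdef, mem_preimage]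
        have : WeakDual.toStrongDual (StrongDual.toWeakDual (δ • ψ)) = δ • ψ := rfl
        rw [this]
        refine (mem_closedBall_zero_iff (E := StrongDual ℝ (StrongDual ℝ P))).mpr ?_
        refine (norm_smul_le δ ψ).trans ?_
        simp only [Real.norm_eq_abs, abs_of_pos hδ]
        nlinarith [norm_nonneg ψ]
      have hmemD : StrongDual.toWeakDual (δ • ψ) ∈ D := by
        have := add_mem_add h0A hmemB
        rwa [zero_add] at this
      have hlt := hFD _ hmemD
      rw [hf₀] at hlt
      have hval : (StrongDual.toWeakDual (δ • ψ)) f₀ = δ * ψ f₀ := rfl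
      rw [hval] at hlt
      have h3 : ψ f₀ < u / δ := (lt_div_iff₀ hδ).mpr (by linarith [mul_comm δ (ψ f₀)])
      have h4 : ψ g = u⁻¹ * ψ f₀ := by rw [hgdef, map_smul]; rfl
      have h5 : (ψ g : ℝ) = ‖g‖ := hψeq
      rw [h4] at h5
      have h6 : u⁻¹ * ψ f₀ < δ⁻¹ := by
        calc u⁻¹ * ψ f₀ < u⁻¹ * (u / δ) := by
              exact mul_lt_mul_of_pos_left h3 (inv_pos.mpr hu)
          _ = δ⁻¹ := by field_simp
      linarith [h5 ▸ h6]
    have hφg := hcond g hgK hgnorm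
    have hφf₀ : u < φ' f₀ := hFφ.trans_eq (by rw [hf₀]; rfl)
    have hcontra : 1 < φ g := by
      have : φ g = u⁻¹ * φ' f₀ := by rw [hgdef, map_smul, hφ' f₀]; rfl
      rw [this]
      rw [show (1:ℝ) = u⁻¹ * u by field_simp]
      exact mul_lt_mul_of_pos_left hφf₀ (by positivity)
    have := abs_lt.mp hφg
    linarith
  obtain ⟨a, ha, b, hb, hab⟩ := hmem
  obtain ⟨a', ⟨x', hx', rfl⟩, rfl⟩ := ha
  refine ⟨ε⁻¹ • x', ?_⟩
  have hι2 : inclusionInDoubleDual ℝ P (ε⁻¹ • x') =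
      ε⁻¹ • inclusionInDoubleDual ℝ P x' := map_smul _ _ _
  have heq : φ' - inclusionInDoubleDual ℝ P (ε⁻¹ • x') = WeakDual.toStrongDual b := by
    rw [hι2]
    have : φ' = ε⁻¹ • inclusionInDoubleDual ℝ P x' + WeakDual.toStrongDual b := by
      have h6 : WeakDual.toStrongDual (ε⁻¹ • ιL x' + b) = φ' := congrArg _ hab
      rw [← h6, map_add, map_smul]
      rfl
    rw [this]
    abel
  rw [heq]
  exact (mem_closedBall_zero_iff (E := StrongDual ℝ (StrongDual ℝ P))).mp
    (show WeakDual.toStrongDual b ∈ closedBall (0 : StrongDual ℝ (StrongDual ℝ P)) δ from hb)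

end helpers


set_option maxHeartbeats 2000000 in
/-- A linear functional on the dual of a Banach space that is Mackey-continuous on every
closed ball is Mackey-continuous on the whole dual, i.e. is evaluation at a point of `P`. -/
theorem stmt3 {P : Type*} [NormedAddCommGroup P] [NormedSpace ℝ P] [CompleteSpace P]
    (φ : StrongDual ℝ P →ₗ[ℝ] ℝ)
    (h : ∀ r : ℝ, 0 < r →
      @ContinuousOn _ _ (mackeyTop P) _ φ (Metric.closedBall 0 r)) :
    @Continuous _ _ (mackeyTop P) _ φ ∧ ∃ x : P, ∀ f : StrongDual ℝ P, φ f = f x := by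
  classical
  -- Step A: φ is norm-bounded
  obtain ⟨K, ⟨hKc, hKv, hKb⟩, hK0, ε, hε, hcond⟩ := extract φ 1 one_pos (h 1 one_pos)
  obtain ⟨C, hC, hCb⟩ := bound_of_weak_compact hKc
  set M : ℝ := 2 * C / ε + 1 with hM
  have hφbdd : ∀ f : StrongDual ℝ P, ‖φ f‖ ≤ M * ‖f‖ := by
    intro f
    by_cases hf0 : f = 0
    · simp [hf0]
    have hfn : 0 < ‖f‖ := norm_pos_iff.mpr hf0
    set m : ℝ := min (ε / (2 * C)) 1 with hm
    have hmpos : 0 < m := lt_min (by positivity) one_pos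
    set t : ℝ := m / ‖f‖ with htdef
    have htpos : 0 < t := by positivity
    have hnorm_tf : ‖t • f‖ = m := by
      rw [norm_smul, Real.norm_eq_abs, abs_of_pos htpos, htdef]
      field_simp
    have h1 : ∀ x ∈ K, |(t • f) x| < ε := by
      intro x hx
      have hb1 : |(t • f) x| ≤ ‖t • f‖ * ‖x‖ := by
        rw [← Real.norm_eq_abs]
        exact (t • f).le_opNorm x
      have hb2 : ‖t • f‖ * ‖x‖ ≤ m * C := by
        rw [hnorm_tf]
        exact mul_le_mul_of_nonneg_left (hCb x hx) hmpos.le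
      have hb3 : m * C ≤ ε / 2 := by
        have := min_le_left (ε / (2 * C)) 1
        calc m * C ≤ (ε / (2 * C)) * C := mul_le_mul_of_nonneg_right this hC.le
          _ = ε / 2 := by field_simp
      linarith
    have h2 : ‖t • f‖ ≤ 1 := by rw [hnorm_tf]; exact min_le_right _ _
    have h3 := hcond (t • f) h1 h2
    have h4 : φ (t • f) = t * φ f := by rw [map_smul]; rfl
    rw [h4, abs_mul, abs_of_pos htpos] at h3
    have h5 : |φ f| < ‖f‖ / m := by
      rw [lt_div_iff₀ hmpos]
      calc |φ f| * m = t * |φ f| * ‖f‖ := by rw [htdef]; field_simp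
        _ < 1 * ‖f‖ := by exact mul_lt_mul_of_pos_right h3 hfn
        _ = ‖f‖ := one_mul _
    have h6 : ‖f‖ / m ≤ M * ‖f‖ := by
      rw [div_eq_mul_inv, mul_comm M ‖f‖]
      refine mul_le_mul_of_nonneg_left ?_ hfn.le
      rcases le_total (ε / (2 * C)) 1 with hle | hge
      · rw [hm, min_eq_left hle, ← one_div, one_div_div]
        rw [hM]
        linarith
      · rw [hm, min_eq_right hge, inv_one, hM]
        have : 0 ≤ 2 * C / ε := by positivity
        linarith
    rw [Real.norm_eq_abs]
    exact le_of_lt (lt_of_lt_of_le h5 h6)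
  set φ' : StrongDual ℝ (StrongDual ℝ P) :=
    LinearMap.mkContinuous φ M hφbdd with hφ'def
  have hφ'f : ∀ f, φ' f = φ f := fun f => rfl
  -- Step B: φ' is in the closed range of the double dual embedding
  have hiso : Isometry ⇑(inclusionInDoubleDual ℝ P) :=
    (inclusionInDoubleDualLi ℝ (E := P)).isometry
  have hclosed : IsClosed (Set.range ⇑(inclusionInDoubleDual ℝ P)) :=
    hiso.isClosedEmbedding.isClosed_range
  have hmemcl : φ' ∈ closure (Set.range (inclusionInDoubleDual ℝ P)) := by
    refine (Metric.mem_closure_iff (α := StrongDual ℝ (StrongDual ℝ P))).mpr ?_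
    intro r hr
    obtain ⟨x, hx⟩ := approx φ h φ' hφ'f (half_pos hr)
    exact ⟨inclusionInDoubleDual ℝ P x, mem_range_self x,
      (dist_eq_norm (E := StrongDual ℝ (StrongDual ℝ P)) _ _).trans_lt (by linarith)⟩
  rw [hclosed.closure_eq] at hmemcl
  obtain ⟨x, hx⟩ := hmemcl
  have heval : ∀ f : StrongDual ℝ P, φ f = f x := by
    intro f
    rw [← hφ'f f, ← hx]
    rfl
  refine ⟨?_, x, heval⟩
  -- Step C: continuity of evaluation at x for the Mackey topology
  set Kx : Set P := (fun s : ℝ => s • x) '' Icc (-1 : ℝ) 1 with hKxdef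
  have hKxc : @IsCompact P (weakTop P) Kx := by
    have hsm : Continuous fun s : ℝ => (toWeakSpaceCLM ℝ P) (s • x) :=
      (toWeakSpaceCLM ℝ P).continuous.comp (continuous_id.smul continuous_const)
    exact @IsCompact.image ℝ P _ (weakTop P) _ _ isCompact_Icc hsm
  have hKxv : Convex ℝ Kx := by
    rintro p ⟨s, hs, rfl⟩ q ⟨u, hu, rfl⟩ a b ha hb hab
    refine ⟨a * s + b * u, ?_, ?_⟩
    · have := (convex_Icc (-1 : ℝ) 1) hs hu ha hb hab
      simpa [smul_eq_mul] using this
    · show (a * s + b * u) • x = a • (s • x) + b • (u • x)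
      module
  have hKxb : Balanced ℝ Kx := by
    intro a ha
    rintro z ⟨y, ⟨s, hs, rfl⟩, rfl⟩
    refine ⟨a * s, ?_, ?_⟩
    · rw [mem_Icc] at hs ⊢
      have ha' : |a| ≤ 1 := by simpa [Real.norm_eq_abs] using ha
      have h1 : |a * s| ≤ 1 := by
        rw [abs_mul]
        exact mul_le_one₀ ha' (abs_nonneg s) (abs_le.mpr hs)
      exact abs_le.mp h1
    · show (a * s) • x = a • (s • x)
      module
  have hxmem : x ∈ Kx := by
    have h9 : (1:ℝ) • x ∈ (fun s : ℝ => s • x) '' Icc (-1:ℝ) 1 :=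
      Set.mem_image_of_mem _ (by norm_num : (1:ℝ) ∈ Icc (-1:ℝ) 1)
    rw [one_smul] at h9
    rw [hKxdef]
    exact h9
  have h2 : Continuous fun g : UniformOnFun P ℝ
      {K : Set P | @IsCompact P (weakTop P) K ∧ Convex ℝ K ∧ Balanced ℝ K} =>
      (UniformOnFun.toFun _) g x :=
    (UniformOnFun.uniformContinuous_eval_of_mem ℝ
      {K : Set P | @IsCompact P (weakTop P) K ∧ Convex ℝ K ∧ Balanced ℝ K} hxmem
      (show Kx ∈ {K : Set P | @IsCompact P (weakTop P) K ∧ Convex ℝ K ∧ Balanced ℝ K} from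
        ⟨hKxc, hKxv, hKxb⟩)).continuous
  have h1 : @Continuous _ _ (mackeyTop P) _ (fun f : StrongDual ℝ P =>
      UniformOnFun.ofFun {K : Set P | @IsCompact P (weakTop P) K ∧ Convex ℝ K ∧ Balanced ℝ K}
        (f : P → ℝ)) := continuous_induced_dom
  have hcont : @Continuous _ _ (mackeyTop P) _ (fun f : StrongDual ℝ P => f x) :=
    @Continuous.comp (StrongDual ℝ P) _ ℝ (mackeyTop P) _ _ _ _ h2 h1
  have : ⇑φ = fun f : StrongDual ℝ P => f x := funext heval
  rw [this]
  exact hcont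
end

section
/- Let P be a real Banach space. The Mackey topology m(P*, P) on P* is complete (as a topological vector space / uniform space). -/
open Topology

/-- The Mackey uniformity `m(P*, P)` on the norm dual of `P`: the uniformity of uniform
convergence on weakly compact, convex, balanced (circled) subsets of `P`. -/
noncomputable def mackeyUniformity (P : Type*) [NormedAddCommGroup P] [NormedSpace ℝ P] :
    UniformSpace (StrongDual ℝ P) :=
  UniformSpace.comap
    (fun f => UniformOnFun.ofFun
      {K : Set P | @IsCompact P (weakTop P) K ∧ Convex ℝ K ∧ Balanced ℝ K} (f : P → ℝ))
    inferInstance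

section Aux

variable {P : Type*} [NormedAddCommGroup P] [NormedSpace ℝ P] [CompleteSpace P]

/-- The balanced hull of a compact set is compact. -/
theorem isCompact_balancedHull_aux {K : Set P} (hK : IsCompact K) :
    IsCompact (balancedHull ℝ K) := by
  have h1 : IsCompact (Metric.closedBall (0 : ℝ) 1 ×ˢ K) :=
    (isCompact_closedBall 0 1).prod hK
  have h2 : IsCompact ((fun p : ℝ × P => p.1 • p.2) '' (Metric.closedBall (0 : ℝ) 1 ×ˢ K)) :=
    h1.image (continuous_fst.smul continuous_snd)
  convert h2 using 1
  ext x
  simp only [mem_balancedHull_iff, Set.mem_image, Set.mem_prod, Metric.mem_closedBall,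
    dist_zero_right, Set.mem_smul_set, Prod.exists]
  constructor
  · rintro ⟨r, hr, y, hy, rfl⟩
    exact ⟨r, y, ⟨hr, hy⟩, rfl⟩
  · rintro ⟨r, y, ⟨hr, hy⟩, rfl⟩
    exact ⟨r, hr, y, hy, rfl⟩

/-- Every norm-compact set is contained in a weakly compact, convex, balanced set. -/
theorem exists_good_superset {K : Set P} (hK : IsCompact K) :
    ∃ L : Set P, (@IsCompact P (weakTop P) L ∧ Convex ℝ L ∧ Balanced ℝ L) ∧ K ⊆ L := by
  set L : Set P := closure (convexHull ℝ (balancedHull ℝ K)) with hLdef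
  have hKL : K ⊆ L :=
    (subset_balancedHull ℝ).trans <| (subset_convexHull ℝ _).trans subset_closure
  have hconv : Convex ℝ L := (convex_convexHull ℝ _).closure
  have hbal : Balanced ℝ L := ((balancedHull.balanced K).convexHull).closure
  have hcomp : IsCompact L := by
    refine TotallyBounded.isCompact_of_isClosed ?_ isClosed_closure
    exact (totallyBounded_convexHull.mpr
      (isCompact_balancedHull_aux hK).totallyBounded).closure
  have hwcomp : @IsCompact P (weakTop P) L := by
    have := hcomp.image (toWeakSpaceCLM ℝ P).continuous
    have himg : ⇑(toWeakSpaceCLM ℝ P) '' L = L := by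
      have : ⇑(toWeakSpaceCLM ℝ P) = id := rfl
      rw [this]; exact Set.image_id L
    rw [himg] at this
    exact this
  exact ⟨L, ⟨hwcomp, hconv, hbal⟩, hKL⟩

end Aux

/-- The Mackey topology `m(P*, P)` on the dual of a Banach space is complete. -/
theorem stmt8 {P : Type*} [NormedAddCommGroup P] [NormedSpace ℝ P] [CompleteSpace P] :
    @CompleteSpace (StrongDual ℝ P) (mackeyUniformity P) := by
  set 𝔖 : Set (Set P) :=
    {K : Set P | @IsCompact P (weakTop P) K ∧ Convex ℝ K ∧ Balanced ℝ K} with h𝔖def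
  have h𝔖 : Topology.IsCoherentWith 𝔖 := by
    refine CompactlyCoherentSpace.isCoherentWith.enlarge ?_
    intro s hs
    obtain ⟨L, hL, hsL⟩ := exists_good_superset hs
    exact ⟨L, hL, hsL⟩
  have h𝔖U : ⋃₀ 𝔖 = Set.univ := by
    apply Set.eq_univ_of_forall
    intro x
    obtain ⟨L, hL, hxL⟩ := exists_good_superset (isCompact_singleton (x := x))
    exact ⟨L, hL, hxL rfl⟩
  have hcomplete : CompleteSpace (UniformConvergenceCLM (RingHom.id ℝ) ℝ 𝔖) :=
    UniformConvergenceCLM.completeSpace (RingHom.id ℝ) ℝ h𝔖 h𝔖U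
  have heq : mackeyUniformity P = UniformConvergenceCLM.instUniformSpace (RingHom.id ℝ) ℝ 𝔖 := by
    rw [UniformConvergenceCLM.uniformSpace_eq]
    rfl
  rw [heq]
  exact hcomplete
end

section
/- Let (T, σ) be a sigma-finite measure space. The lattice operation (f, g) ↦ f ∨ g is jointly continuous on L∞(T, σ) for the Mackey topology m(L∞, L¹) restricted to norm-bounded sets; equivalently, if norm-bounded sequences fₙ → f and gₙ → g in measure on sets of finite measure, then fₙ ∨ gₙ → f ∨ g in measure on sets of finite measure. -/
open Topology Filter MeasureTheory ENNReal

/-- Joint continuity of the lattice operation `⊔` on norm-bounded subsets of `L∞` for the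
topology of convergence in measure on sets of finite measure (which agrees there with the
Mackey topology `m(L∞, L¹)`): if norm-bounded sequences `Fₙ → f` and `Gₙ → g` in measure on
every set of finite measure, then `Fₙ ⊔ Gₙ → f ⊔ g` in measure on every set of finite
measure. -/
theorem stmt10 {T : Type*} [MeasurableSpace T] (μ : MeasureTheory.Measure T) [SigmaFinite μ]
    (r : ℝ) (F G : ℕ → Lp ℝ ∞ μ) (f g : Lp ℝ ∞ μ)
    (hF : ∀ n, ‖F n‖ ≤ r) (hG : ∀ n, ‖G n‖ ≤ r)
    (hFf : ∀ A : Set T, μ A < ⊤ →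
      TendstoInMeasure (μ.restrict A) (fun n => (F n : T → ℝ)) atTop f)
    (hGg : ∀ A : Set T, μ A < ⊤ →
      TendstoInMeasure (μ.restrict A) (fun n => (G n : T → ℝ)) atTop g) :
    ∀ A : Set T, μ A < ⊤ →
      TendstoInMeasure (μ.restrict A) (fun n => ((F n ⊔ G n : Lp ℝ ∞ μ) : T → ℝ)) atTop
        (f ⊔ g : Lp ℝ ∞ μ) := by
  intro A hA ε hε
  have h1 := hFf A hA (ε / 2) (ENNReal.half_pos hε.ne')
  have h2 := hGg A hA (ε / 2) (ENNReal.half_pos hε.ne')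
  have key : ∀ n,
      μ.restrict A {x | ε ≤ edist (((F n ⊔ G n : Lp ℝ ∞ μ) : T → ℝ) x)
          (((f ⊔ g : Lp ℝ ∞ μ) : T → ℝ) x)} ≤
        μ.restrict A {x | ε / 2 ≤ edist ((F n : T → ℝ) x) ((f : T → ℝ) x)} +
          μ.restrict A {x | ε / 2 ≤ edist ((G n : T → ℝ) x) ((g : T → ℝ) x)} := by
    intro n
    refine le_trans (measure_mono_ae ?_) (measure_union_le _ _)
    have hs1 : (((F n ⊔ G n : Lp ℝ ∞ μ) : T → ℝ)) =ᵐ[μ.restrict A]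
        (F n : T → ℝ) ⊔ (G n : T → ℝ) := ae_restrict_of_ae (Lp.coeFn_sup _ _)
    have hs2 : (((f ⊔ g : Lp ℝ ∞ μ) : T → ℝ)) =ᵐ[μ.restrict A]
        (f : T → ℝ) ⊔ (g : T → ℝ) := ae_restrict_of_ae (Lp.coeFn_sup _ _)
    filter_upwards [hs1, hs2] with x e1 e2 hx
    have hx' : ε ≤ edist (((F n ⊔ G n : Lp ℝ ∞ μ) : T → ℝ) x)
        (((f ⊔ g : Lp ℝ ∞ μ) : T → ℝ) x) := hx
    rw [e1, e2] at hx'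
    simp only [Pi.sup_apply] at hx'
    replace hx := hx'
    show _ ∨ _
    have hb : edist (max ((F n : T → ℝ) x) ((G n : T → ℝ) x))
        (max ((f : T → ℝ) x) ((g : T → ℝ) x)) ≤
        max (edist ((F n : T → ℝ) x) ((f : T → ℝ) x))
          (edist ((G n : T → ℝ) x) ((g : T → ℝ) x)) := by
      rw [edist_dist, edist_dist, edist_dist, ← ENNReal.ofReal_max]
      simp only [Real.dist_eq]
      exact ENNReal.ofReal_le_ofReal (abs_max_sub_max_le_max _ _ _ _)
    have hx' : ε ≤ max (edist ((F n : T → ℝ) x) ((f : T → ℝ) x))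
        (edist ((G n : T → ℝ) x) ((g : T → ℝ) x)) := le_trans hx hb
    rcases le_max_iff.mp hx' with h | h
    · exact Or.inl (le_trans ENNReal.half_le_self h)
    · exact Or.inr (le_trans ENNReal.half_le_self h)
  have hsum := h1.add h2
  simpa using tendsto_of_tendsto_of_tendsto_of_le_of_le
    (tendsto_const_nhds (x := (0 : ℝ≥0∞))) (by simpa using hsum)
    (fun n => zero_le) key
end

section
/- Let Y be an infinite-dimensional real Banach space with the Schur property. Then a subset A of Y is closed in the compact weak topology kw(Y, Y*) if and only if A is norm-closed; i.e., kw(Y, Y*) equals the norm topology. -/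
open Topology Filter

/-- The compact weak topology `kw(Y, Y*)`: the finest topology agreeing with the weak topology
on every weakly compact set, realized as the final topology with respect to the inclusions of
all weakly compact sets carrying the weak subspace topology. -/
noncomputable def kwTop (Y : Type*) [NormedAddCommGroup Y] [NormedSpace ℝ Y] :
    TopologicalSpace Y :=
  ⨆ K : {K : Set Y // @IsCompact Y (weakTop Y) K},
    TopologicalSpace.coinduced (Subtype.val : K.1 → Y)
      (TopologicalSpace.induced (Subtype.val : K.1 → Y) (weakTop Y))

section Aux

variable {Y : Type*} [NormedAddCommGroup Y] [NormedSpace ℝ Y]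

/-- The weak topology is Hausdorff. -/
lemma weakSpace_t2 : T2Space (WeakSpace ℝ Y) := by
  constructor
  intro x y hxy
  have hne : (toWeakSpace ℝ Y).symm x - (toWeakSpace ℝ Y).symm y ≠ 0 := by
    rw [sub_ne_zero]
    exact fun h => hxy (by simpa using congrArg (toWeakSpace ℝ Y) h)
  obtain ⟨f, hf1, hf2⟩ := exists_dual_vector ℝ _ (norm_ne_zero_iff.mpr hne)
  have hc : Continuous fun w : WeakSpace ℝ Y => f ((toWeakSpace ℝ Y).symm w) :=
    WeakBilin.eval_continuous ((topDualPairing ℝ Y).flip) f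
  refine separated_by_continuous hc ?_
  intro h
  rw [map_sub] at hf2
  rw [h, sub_self] at hf2
  exact hne (by simpa [norm_eq_zero] using hf2.symm)

/-- A norm-closed convex set is weakly closed. -/
lemma isClosed_weak_of_convex {s : Set Y} (hconv : Convex ℝ s) (hs : IsClosed s) :
    IsClosed (toWeakSpace ℝ Y '' s) := by
  have h := hconv.toWeakSpace_closure (𝕜 := ℝ)
  rw [hs.closure_eq] at h
  exact closure_eq_iff_isClosed.mp h.symm

/-- In a Schur space, weakly compact sets are norm compact. -/
lemma weakCompact_isCompact [CompleteSpace Y] [Nontrivial Y]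
    (hschur : ∀ (x : ℕ → Y) (y : Y),
      Tendsto x atTop (@nhds _ (weakTop Y) y) → Tendsto x atTop (nhds y))
    (K : Set (WeakSpace ℝ Y)) (hK : IsCompact K) :
    IsCompact (toWeakSpace ℝ Y ⁻¹' K) := by
  haveI : T2Space (WeakSpace ℝ Y) := weakSpace_t2
  apply IsSeqCompact.isCompact
  intro x hx
  -- the closed span of the sequence
  set Z : Submodule ℝ Y := (Submodule.span ℝ (Set.range x)).topologicalClosure with hZdef
  have hxZ : ∀ n, x n ∈ Z :=
    fun n => Submodule.le_topologicalClosure _ (Submodule.subset_span (Set.mem_range_self n))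
  have hZclosed : IsClosed (Z : Set Y) := Submodule.isClosed_topologicalClosure _
  have hZsep : TopologicalSpace.IsSeparable (Z : Set Y) := by
    rw [hZdef, Submodule.topologicalClosure_coe]
    exact ((Set.countable_range x).isSeparable.span).closure
  have hZw : IsClosed (toWeakSpace ℝ Y '' (Z : Set Y)) :=
    isClosed_weak_of_convex (Z.convex) hZclosed
  -- the weakly compact set S
  set S : Set (WeakSpace ℝ Y) := K ∩ (toWeakSpace ℝ Y '' (Z : Set Y)) with hSdef
  have hS : IsCompact S := hK.inter_right hZw
  haveI : CompactSpace S := isCompact_iff_compactSpace.mp hS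
  -- a countable separating family of functionals on Z
  obtain ⟨c, hc_count, hc_dense⟩ := hZsep
  have hc'_count : (insert (0 : Y) c).Countable := hc_count.insert 0
  obtain ⟨g, hg⟩ := (Set.countable_iff_exists_subset_range.mp hc'_count)
  choose f hf1 hf2 using fun n => exists_dual_vector' ℝ (g n)
  have hf2' : ∀ n, f n (g n) = ‖g n‖ := fun n => by exact_mod_cast hf2 n
  have hsep : ∀ z ∈ (Z : Set Y), (∀ n, f n z = 0) → z = 0 := by
    intro z hz hfz
    by_contra hz0
    have hzpos : (0:ℝ) < ‖z‖ := norm_pos_iff.mpr hz0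
    have hzc : z ∈ closure (Set.range g) :=
      closure_mono (subset_trans (Set.subset_insert 0 c) hg) (hc_dense hz)
    obtain ⟨w, hw, hwz⟩ := Metric.mem_closure_iff.mp hzc (‖z‖ / 3)
      (by linarith)
    obtain ⟨j, rfl⟩ := hw
    have hdist : ‖z - g j‖ < ‖z‖ / 3 := by rwa [← dist_eq_norm]
    have hgj : ‖z‖ - ‖z - g j‖ ≤ ‖g j‖ := by
      have := norm_sub_norm_le z (g j)
      linarith
    have hb : |f j (z - g j)| ≤ ‖z - g j‖ := by
      have := (f j).le_opNorm (z - g j)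
      rwa [hf1 j, one_mul, Real.norm_eq_abs] at this
    have hsplit : f j z = f j (g j) + f j (z - g j) := by
      rw [map_sub]; ring
    rw [hfz j, hf2' j] at hsplit
    rw [abs_le] at hb
    linarith [hb.1]
  -- the map into ℝ^ℕ
  set Φ : WeakSpace ℝ Y → (ℕ → ℝ) := fun y n => f n ((toWeakSpace ℝ Y).symm y) with hΦdef
  have hΦc : Continuous Φ :=
    continuous_pi fun n => WeakBilin.eval_continuous ((topDualPairing ℝ Y).flip) (f n)
  let e : S → (ℕ → ℝ) := fun s => Φ s.val
  have he : Continuous e := hΦc.comp continuous_subtype_val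
  have heinj : Function.Injective e := by
    rintro ⟨a, haK, a', ha', rfl⟩ ⟨b, hbK, b', hb', rfl⟩ h
    have hab : ∀ n, f n (a' - b') = 0 := by
      intro n
      have := congrFun h n
      simp only [e, Φ] at this
      rw [map_sub]
      simp only [LinearEquiv.symm_apply_apply] at this
      rw [this]; ring
    have : a' - b' = 0 := hsep _ (Z.sub_mem ha' hb') hab
    have : a' = b' := by rwa [sub_eq_zero] at this
    simp [this]
  have hemb := (he.isClosedEmbedding heinj).isEmbedding
  -- the sequence inside S
  have hu : ∀ n, toWeakSpace ℝ Y (x n) ∈ S :=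
    fun n => ⟨hx n, ⟨x n, hxZ n, rfl⟩⟩
  set u : ℕ → S := fun n => ⟨toWeakSpace ℝ Y (x n), hu n⟩ with hudef
  -- extract a convergent subsequence of the images in ℝ^ℕ
  have hrange : IsCompact (Set.range e) := isCompact_range he
  obtain ⟨p, hp, φ, hφ, hconv⟩ := hrange.tendsto_subseq
    (x := fun n => e (u n)) (fun n => Set.mem_range_self _)
  obtain ⟨a, rfl⟩ := hp
  have htS : Tendsto (fun n => u (φ n)) atTop (𝓝 a) := by
    rw [hemb.tendsto_nhds_iff]
    exact hconv
  have htW : Tendsto (fun n => (u (φ n)).val) atTop (𝓝 a.val) :=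
    (continuous_subtype_val.tendsto a).comp htS
  -- transfer to the norm topology via the Schur property
  set a' : Y := (toWeakSpace ℝ Y).symm a.val with ha'def
  have htW' : Tendsto (fun n => x (φ n)) atTop (@nhds _ (weakTop Y) a') := by
    have hval : a.val = toWeakSpace ℝ Y a' := by simp [ha'def]
    rw [hval] at htW
    exact htW
  have hnorm : Tendsto (fun n => x (φ n)) atTop (nhds a') :=
    hschur (fun n => x (φ n)) a' htW'
  refine ⟨a', ?_, φ, hφ, hnorm⟩
  have : toWeakSpace ℝ Y a' = a.val := by simp [ha'def]
  simp only [Set.mem_preimage, this]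
  exact a.2.1

end Aux

/-- If `Y` is an infinite-dimensional Banach space with the Schur property, then a set is
`kw`-closed iff it is norm-closed; i.e. the compact weak topology is the norm topology. -/
theorem stmt13 {Y : Type*} [NormedAddCommGroup Y] [NormedSpace ℝ Y] [CompleteSpace Y]
    (hinf : ¬ FiniteDimensional ℝ Y)
    (hschur : ∀ (x : ℕ → Y) (y : Y),
      Tendsto x atTop (@nhds _ (weakTop Y) y) → Tendsto x atTop (nhds y)) :
    (∀ A : Set Y, @IsClosed _ (kwTop Y) A ↔ IsClosed A) ∧
      kwTop Y = (inferInstance : TopologicalSpace Y) := by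
  haveI : Nontrivial Y := by
    by_contra h
    haveI := not_nontrivial_iff_subsingleton.mp h
    exact hinf (Module.Finite.of_basis (Module.Basis.empty Y : Module.Basis (Fin 0) ℝ Y))
  haveI : T2Space (WeakSpace ℝ Y) := weakSpace_t2
  -- norm compact sets are weakly compact
  have hcw : ∀ K : Set Y, IsCompact K → @IsCompact Y (weakTop Y) K := by
    intro K hK
    have h2 : IsCompact (toWeakSpace ℝ Y '' K) := hK.image (toWeakSpaceCLM ℝ Y).continuous
    have himg : toWeakSpace ℝ Y '' K = (K : Set Y) :=
      Set.ext fun z => ⟨fun ⟨y, hy, h⟩ => h ▸ hy, fun hz => ⟨z, hz, rfl⟩⟩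
    rw [himg] at h2
    exact h2
  -- weakly compact sets are norm compact
  have hwc : ∀ K : Set Y, @IsCompact Y (weakTop Y) K → IsCompact K := by
    intro K hK
    have h2 : IsCompact (toWeakSpace ℝ Y ⁻¹' (K : Set (WeakSpace ℝ Y))) :=
      weakCompact_isCompact hschur K hK
    have hpre : toWeakSpace ℝ Y ⁻¹' (K : Set (WeakSpace ℝ Y)) = K := rfl
    rwa [hpre] at h2
  -- direction (i): kw-closed implies norm-closed
  have dir1 : ∀ A : Set Y, @IsClosed _ (kwTop Y) A → IsClosed A := by
    intro A hA
    refine IsSeqClosed.isClosed ?_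
    intro xs p hmem htend
    set K : Set Y := insert p (Set.range xs) with hKdef
    have hKcomp : IsCompact K := htend.isCompact_insert_range
    have hKw : @IsCompact Y (weakTop Y) K := hcw K hKcomp
    have hopen : IsOpen[⨆ K : {K : Set Y // @IsCompact Y (weakTop Y) K},
        TopologicalSpace.coinduced (Subtype.val : K.1 → Y)
          (TopologicalSpace.induced (Subtype.val : K.1 → Y) (weakTop Y))] Aᶜ :=
      hA.isOpen_compl
    rw [isOpen_iSup_iff] at hopen
    have hK' := hopen ⟨K, hKw⟩
    rw [isOpen_coinduced, @isOpen_induced_iff _ _ (weakTop Y) _ _] at hK'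
    obtain ⟨V, hV, hVA⟩ := hK'
    have hmemK : ∀ y, y ∈ K → (y ∈ V ↔ y ∉ A) := by
      intro y hy
      have := Set.ext_iff.mp hVA ⟨y, hy⟩
      simpa using this
    have hVW : IsOpen (show Set (WeakSpace ℝ Y) from V) := hV
    have hVc : IsClosed (show Set (WeakSpace ℝ Y) from V)ᶜ := isClosed_compl_iff.mpr hVW
    have hwt : Tendsto (fun n => toWeakSpace ℝ Y (xs n)) atTop (𝓝 (toWeakSpace ℝ Y p)) :=
      ((toWeakSpaceCLM ℝ Y).continuous.tendsto p).comp htend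
    have hpVc : toWeakSpace ℝ Y p ∈ (show Set (WeakSpace ℝ Y) from V)ᶜ := by
      refine hVc.mem_of_tendsto hwt (Eventually.of_forall fun n => ?_)
      have hn : xs n ∉ V := fun hVn =>
        (hmemK (xs n) (Set.mem_insert_of_mem _ (Set.mem_range_self n))).mp hVn (hmem n)
      exact hn
    have hpV : p ∉ V := hpVc
    by_contra hpA
    exact hpV ((hmemK p (Set.mem_insert _ _)).mpr hpA)
  -- direction (ii): norm-closed implies kw-closed
  have dir2 : ∀ A : Set Y, IsClosed A → @IsClosed _ (kwTop Y) A := by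
    intro A hA
    rw [← @isOpen_compl_iff Y A (kwTop Y)]
    have hopen : IsOpen[⨆ K : {K : Set Y // @IsCompact Y (weakTop Y) K},
        TopologicalSpace.coinduced (Subtype.val : K.1 → Y)
          (TopologicalSpace.induced (Subtype.val : K.1 → Y) (weakTop Y))] Aᶜ := by
      rw [isOpen_iSup_iff]
      rintro ⟨K, hKw⟩
      rw [isOpen_coinduced, @isOpen_induced_iff _ _ (weakTop Y) _ _]
      refine ⟨(A ∩ K)ᶜ, ?_, ?_⟩
      · -- A ∩ K is weakly closed since it is norm compact
        have hAK : IsCompact (A ∩ K) := (hwc K hKw).inter_left hA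
        have hAKw : IsCompact (toWeakSpace ℝ Y '' (A ∩ K)) :=
          hAK.image (toWeakSpaceCLM ℝ Y).continuous
        have himg : toWeakSpace ℝ Y '' (A ∩ K) = ((A ∩ K : Set Y) : Set (WeakSpace ℝ Y)) :=
          Set.ext fun z => ⟨fun ⟨y, hy, h⟩ => h ▸ hy, fun hz => ⟨z, hz, rfl⟩⟩
        rw [himg] at hAKw
        have hcl : @IsClosed (WeakSpace ℝ Y) _ (A ∩ K) := hAKw.isClosed
        exact hcl.isOpen_compl
      · ext ⟨y, hy⟩
        simp [hy]
    exact hopen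
  have heq : kwTop Y = (inferInstance : TopologicalSpace Y) :=
    TopologicalSpace.ext_isClosed fun s => ⟨dir1 s, dir2 s⟩
  exact ⟨fun A => ⟨dir1 A, dir2 A⟩, heq⟩
end

section
/- The space l¹ of absolutely summable real sequences has the Schur property: every weakly convergent sequence in l¹ converges in norm. -/
open Topology Filter

lemma l1_summable (f : lp (fun _ : ℕ => ℝ) 1) : Summable fun n => ‖f n‖ := by
  simpa using (lp.memℓp f).summable (p := 1) (by norm_num)

lemma l1_norm_eq (f : lp (fun _ : ℕ => ℝ) 1) : ‖f‖ = ∑' n, ‖f n‖ := by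
  have h := lp.hasSum_norm (p := 1) (by norm_num) f
  simp only [ENNReal.toReal_one, Real.rpow_one] at h
  exact h.tsum_eq.symm

lemma abs_sign_le (x : ℝ) : |Real.sign x| ≤ 1 := by
  rcases lt_trichotomy x 0 with h | h | h
  · rw [Real.sign_of_neg h]; norm_num
  · rw [h, Real.sign_zero]; norm_num
  · rw [Real.sign_of_pos h]; norm_num

lemma real_sign_mul_self (x : ℝ) : Real.sign x * x = |x| := by
  rcases lt_trichotomy x 0 with h | h | h
  · rw [Real.sign_of_neg h, abs_of_neg h]; ring
  · rw [h, Real.sign_zero, abs_zero, mul_zero]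
  · rw [Real.sign_of_pos h, abs_of_pos h, one_mul]

lemma exists_phi (a : ℕ → ℝ) (ha : ∀ n, |a n| ≤ 1) :
    ∃ φ : lp (fun _ : ℕ => ℝ) 1 →L[ℝ] ℝ, ∀ f, φ f = ∑' n, a n * f n := by
  have hb : ∀ (f : lp (fun _ : ℕ => ℝ) 1) n, ‖a n * f n‖ ≤ ‖f n‖ := by
    intro f n
    rw [norm_mul]
    calc ‖a n‖ * ‖f n‖ ≤ 1 * ‖f n‖ := by
          apply mul_le_mul_of_nonneg_right _ (norm_nonneg _)
          simpa using ha n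
      _ = ‖f n‖ := one_mul _
  have hsum' : ∀ f : lp (fun _ : ℕ => ℝ) 1, Summable fun n => a n * f n := fun f =>
    Summable.of_norm (Summable.of_nonneg_of_le (fun n => norm_nonneg _) (hb f) (l1_summable f))
  refine ⟨LinearMap.mkContinuous
    { toFun := fun f => ∑' n, a n * f n
      map_add' := ?_
      map_smul' := ?_ } 1 ?_, fun f => rfl⟩
  · intro f g
    have : ∀ n, a n * (f + g) n = a n * f n + a n * g n := by
      intro n; rw [lp.coeFn_add]; simp; ring
    show ∑' n, a n * (f + g) n = _
    rw [tsum_congr this, Summable.tsum_add (hsum' f) (hsum' g)]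
  · intro c f
    have : ∀ n, a n * (c • f) n = c * (a n * f n) := by
      intro n; rw [lp.coeFn_smul]; simp; ring
    show ∑' n, a n * (c • f) n = _
    rw [tsum_congr this, tsum_mul_left]
    rfl
  · intro f
    calc ‖∑' n, a n * f n‖ ≤ ∑' n, ‖a n * f n‖ := norm_tsum_le_tsum_norm ((hsum' f).abs)
      _ ≤ ∑' n, ‖f n‖ := Summable.tsum_le_tsum (hb f) ((hsum' f).abs) (l1_summable f)
      _ = 1 * ‖f‖ := by rw [l1_norm_eq f, one_mul]

lemma schur_aux (z : ℕ → lp (fun _ : ℕ => ℝ) 1)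
    (hpt : ∀ φ : lp (fun _ : ℕ => ℝ) 1 →L[ℝ] ℝ, Tendsto (fun j => φ (z j)) atTop (nhds 0)) :
    Tendsto (fun j => ‖z j‖) atTop (nhds 0) := by
  by_contra hcon
  rw [Metric.tendsto_atTop] at hcon
  push_neg at hcon
  obtain ⟨ε, hε, hfreq⟩ := hcon
  have hfreq' : ∀ N, ∃ j ≥ N, ε ≤ ‖z j‖ := by
    intro N; obtain ⟨j, hj, hd⟩ := hfreq N
    exact ⟨j, hj, by simpa [Real.dist_eq, abs_of_nonneg (norm_nonneg _)] using hd⟩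
  set S : ℕ → ℕ → ℝ := fun j m => ∑ n ∈ Finset.range m, ‖z j n‖ with hS
  have hcoord : ∀ n₀, Tendsto (fun j => (z j : ℕ → ℝ) n₀) atTop (nhds 0) := by
    intro n₀
    obtain ⟨φ, hφ⟩ := exists_phi (fun n => if n = n₀ then 1 else 0)
      (by intro n; by_cases h : n = n₀ <;> simp [h])
    have he : ∀ f : lp (fun _ : ℕ => ℝ) 1, φ f = f n₀ := by
      intro f
      rw [hφ]
      rw [show (fun n => (if n = n₀ then (1:ℝ) else 0) * f n)
          = fun n => if n = n₀ then ((f : ℕ → ℝ) n₀ : ℝ) else 0 from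
        funext fun n => by split_ifs with h <;> simp [h]]
      exact tsum_ite_eq n₀ _
    have := hpt φ
    simpa [he] using this
  have hinit : ∀ m, Tendsto (fun j => S j m) atTop (nhds 0) := by
    intro m
    have : Tendsto (fun j => ∑ n ∈ Finset.range m, ‖z j n‖) atTop
        (nhds (∑ n ∈ Finset.range m, (0:ℝ))) := by
      apply tendsto_finset_sum
      intro n _
      simpa using (hcoord n).norm
    simpa only [Finset.sum_const_zero] using this
  have htail : ∀ j, Tendsto (fun m => S j m) atTop (nhds ‖z j‖) := by
    intro j
    have := (l1_summable (z j)).hasSum.tendsto_sum_nat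
    rwa [← l1_norm_eq] at this
  have hstep : ∀ p : ℕ × ℕ, ∃ q : ℕ × ℕ, p.1 < q.1 ∧ p.2 < q.2 ∧ ε ≤ ‖z q.1‖ ∧
      S q.1 p.2 < ε/8 ∧ ‖z q.1‖ - S q.1 q.2 < ε/8 := by
    intro p
    have h8 : 0 < ε/8 := by linarith
    obtain ⟨N, hN⟩ := (Metric.tendsto_atTop.1 (hinit p.2)) (ε/8) h8
    obtain ⟨j, hj, hjε⟩ := hfreq' (max N (p.1+1))
    have hjN : N ≤ j := le_trans (le_max_left _ _) hj
    have hjp : p.1 < j := lt_of_lt_of_le (Nat.lt_succ_self _) (le_trans (le_max_right _ _) hj)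
    obtain ⟨M, hM⟩ := (Metric.tendsto_atTop.1 (htail j)) (ε/8) h8
    refine ⟨(j, max M (p.2+1)), hjp,
      lt_of_lt_of_le (Nat.lt_succ_self _) (le_max_right _ _), hjε, ?_, ?_⟩
    · have := hN j hjN
      rw [Real.dist_eq, sub_zero] at this
      calc S j p.2 ≤ |S j p.2| := le_abs_self _
        _ < ε/8 := this
    · have := hM (max M (p.2+1)) (le_max_left _ _)
      rw [Real.dist_eq] at this
      calc ‖z j‖ - S j (max M (p.2+1)) ≤ |S j (max M (p.2+1)) - ‖z j‖| := by
            rw [abs_sub_comm]; exact le_abs_self _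
        _ < ε/8 := this
  choose F hF1 hF2 hF3 hF4 hF5 using hstep
  set g : ℕ → ℕ × ℕ := fun i => F^[i] (0, 0) with hg
  set kk : ℕ → ℕ := fun i => (g i).1 with hkk
  set mm : ℕ → ℕ := fun i => (g i).2 with hmm
  have hgsucc : ∀ i, g (i+1) = F (g i) := fun i => Function.iterate_succ_apply' F i (0, 0)
  have hk1 : ∀ i, kk i < kk (i+1) := by
    intro i; have := hF1 (g i); rw [← hgsucc i] at this; exact this
  have hm1 : ∀ i, mm i < mm (i+1) := by
    intro i; have := hF2 (g i); rw [← hgsucc i] at this; exact this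
  have hnormε : ∀ i, ε ≤ ‖z (kk (i+1))‖ := by
    intro i; have := hF3 (g i); rw [← hgsucc i] at this; exact this
  have hinit' : ∀ i, S (kk (i+1)) (mm i) < ε/8 := by
    intro i; have := hF4 (g i); rw [← hgsucc i] at this; exact this
  have htail' : ∀ i, ‖z (kk (i+1))‖ - S (kk (i+1)) (mm (i+1)) < ε/8 := by
    intro i; have := hF5 (g i); rw [← hgsucc i] at this; exact this
  have hkmono : StrictMono kk := strictMono_nat_of_lt_succ hk1
  have hmmono : StrictMono mm := strictMono_nat_of_lt_succ hm1
  have hmm0 : mm 0 = 0 := rfl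
  have hIex : ∀ n, ∃ i, n < mm (i+1) := fun n =>
    ⟨n, lt_of_lt_of_le (Nat.lt_succ_self n) (hmmono.le_apply)⟩
  set I : ℕ → ℕ := fun n => Nat.find (hIex n) with hI
  have hIlt : ∀ n, n < mm (I n + 1) := fun n => Nat.find_spec (hIex n)
  have hIle : ∀ n, mm (I n) ≤ n := by
    intro n
    rcases Nat.eq_zero_or_pos (I n) with h0 | hpos
    · rw [h0, hmm0]; exact Nat.zero_le n
    · obtain ⟨j, hj⟩ := Nat.exists_eq_succ_of_ne_zero (Nat.pos_iff_ne_zero.1 hpos)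
      have := Nat.find_min (hIex n) (show j < I n from hj ▸ Nat.lt_succ_self j)
      rw [hj]; exact le_of_not_gt this
  have hIuniq : ∀ i n, mm i ≤ n → n < mm (i+1) → I n = i := by
    intro i n h1 h2
    apply le_antisymm
    · exact Nat.find_le h2
    · by_contra hlt
      push_neg at hlt
      have hmono2 : mm (I n + 1) ≤ mm i := hmmono.monotone (Nat.succ_le_of_lt hlt)
      exact absurd (lt_of_lt_of_le (hIlt n) (le_trans hmono2 h1)) (lt_irrefl n)
  set a : ℕ → ℝ := fun n => Real.sign ((z (kk (I n + 1)) : ℕ → ℝ) n) with ha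
  obtain ⟨φ, hφ⟩ := exists_phi a (fun n => abs_sign_le _)
  have hsubmono : StrictMono (fun i => kk (i+1)) := fun p q hpq => hkmono (by omega)
  have hsub : Tendsto (fun i => φ (z (kk (i+1)))) atTop (nhds 0) :=
    (hpt φ).comp hsubmono.tendsto_atTop
  have hmain : ∀ i, ε/2 ≤ φ (z (kk (i+1))) := by
    intro i
    set w := z (kk (i+1)) with hw
    have hws : Summable fun n => ‖w n‖ := l1_summable w
    have habs : ∀ n, |a n * w n| ≤ ‖w n‖ := by
      intro n
      rw [abs_mul, Real.norm_eq_abs]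
      calc |a n| * |w n| ≤ 1 * |w n| :=
            mul_le_mul_of_nonneg_right (abs_sign_le _) (abs_nonneg _)
        _ = |w n| := one_mul _
    have hwa : Summable fun n => a n * w n :=
      Summable.of_norm (Summable.of_nonneg_of_le (fun n => norm_nonneg _)
        (fun n => by rw [Real.norm_eq_abs]; exact habs n) hws)
    have hblock : ∀ n ∈ Finset.Ico (mm i) (mm (i+1)), a n * w n = ‖w n‖ := by
      intro n hn
      rw [Finset.mem_Ico] at hn
      have hIn : I n = i := hIuniq i n hn.1 hn.2
      show Real.sign ((z (kk (I n + 1)) : ℕ → ℝ) n) * w n = ‖w n‖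
      rw [hIn, Real.norm_eq_abs]
      exact real_sign_mul_self _
    set c : ℕ → ℝ := fun n => ‖w n‖ - a n * w n with hc
    have hcs : Summable c := hws.sub hwa
    have hφw : φ w = ‖w‖ - ∑' n, c n := by
      rw [hφ w, l1_norm_eq w, ← Summable.tsum_sub hws hcs]
      exact tsum_congr fun n => by simp [hc]
    set d : ℕ → ℝ := fun n =>
      if n ∈ Finset.Ico (mm i) (mm (i+1)) then 0 else 2 * ‖w n‖ with hd
    have hcd : ∀ n, c n ≤ d n := by
      intro n
      simp only [hd]
      split_ifs with hn
      · have := hblock n hn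
        simp only [hc]
        linarith
      · have h1 := habs n
        have h2 := neg_abs_le (a n * w n)
        simp only [hc]
        linarith
    have hds : Summable d := by
      apply Summable.of_nonneg_of_le (fun n => ?_) (fun n => ?_) (hws.mul_left 2)
      · simp only [hd]; split_ifs <;> positivity
      · simp only [hd]; split_ifs with hn
        · positivity
        · exact le_refl _
    have hes : Summable (fun n =>
        if n ∈ Finset.Ico (mm i) (mm (i+1)) then 2 * ‖w n‖ else 0) :=
      summable_of_ne_finset_zero (s := Finset.Ico (mm i) (mm (i+1))) (fun n hn => if_neg hn)
    have he : ∑' n, (if n ∈ Finset.Ico (mm i) (mm (i+1)) then 2 * ‖w n‖ else 0)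
        = ∑ n ∈ Finset.Ico (mm i) (mm (i+1)), 2 * ‖w n‖ := by
      rw [tsum_eq_sum (s := Finset.Ico (mm i) (mm (i+1))) (fun n hn => if_neg hn)]
      exact Finset.sum_congr rfl fun n hn => if_pos hn
    have hdsum : ∑' n, d n = 2 * ‖w‖ - ∑ n ∈ Finset.Ico (mm i) (mm (i+1)), 2 * ‖w n‖ := by
      have hdd : ∀ n, d n = 2 * ‖w n‖
          - (if n ∈ Finset.Ico (mm i) (mm (i+1)) then 2 * ‖w n‖ else 0) := by
        intro n; simp only [hd]; split_ifs <;> ring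
      rw [tsum_congr hdd, Summable.tsum_sub (hws.mul_left 2) hes, he, tsum_mul_left, ← l1_norm_eq]
    have hico : ∑ n ∈ Finset.Ico (mm i) (mm (i+1)), 2 * ‖w n‖
        = 2 * S (kk (i+1)) (mm (i+1)) - 2 * S (kk (i+1)) (mm i) := by
      rw [Finset.sum_Ico_eq_sub _ (hmmono.monotone (Nat.le_succ i))]
      simp only [hS, Finset.mul_sum, ← hw]
    have hcle : ∑' n, c n ≤ ∑' n, d n := Summable.tsum_le_tsum hcd hcs hds
    have h1 := hnormε i
    have h2 := hinit' i
    have h3 := htail' i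
    have h1' : ε ≤ ‖w‖ := by rw [hw]; exact h1
    have h3' : ‖w‖ - S (kk (i+1)) (mm (i+1)) < ε/8 := by rw [hw]; exact h3
    rw [hφw]
    rw [hdsum, hico] at hcle
    linarith [hcle, h2, h1', h3']
  obtain ⟨N, hN⟩ := (Metric.tendsto_atTop.1 hsub) (ε/2) (by linarith)
  have hN2 := hN N (le_refl N)
  rw [Real.dist_eq, sub_zero] at hN2
  have := hmain N
  have := le_abs_self (φ (z (kk (N+1))))
  linarith

/-- **Schur property of `ℓ¹`**: every weakly convergent sequence in `ℓ¹` converges in norm. -/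
theorem stmt17 (x : ℕ → lp (fun _ : ℕ => ℝ) 1) (y : lp (fun _ : ℕ => ℝ) 1)
    (h : Tendsto x atTop (@nhds _ (weakTop (lp (fun _ : ℕ => ℝ) 1)) y)) :
    Tendsto x atTop (nhds y) := by
  have heval : ∀ φ : lp (fun _ : ℕ => ℝ) 1 →L[ℝ] ℝ,
      Tendsto (fun k => φ (x k)) atTop (nhds (φ y)) := by
    intro φ
    have hc : Continuous fun v : WeakSpace ℝ (lp (fun _ : ℕ => ℝ) 1) =>
        ((topDualPairing ℝ (lp (fun _ : ℕ => ℝ) 1)).flip) v φ :=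
      WeakBilin.eval_continuous _ φ
    exact (hc.tendsto y).comp h
  rw [tendsto_iff_norm_sub_tendsto_zero]
  apply schur_aux (fun k => x k - y)
  intro φ
  have := (heval φ).sub (tendsto_const_nhds (x := φ y))
  simpa [map_sub] using this
end

section
/- Let P be a real Banach space containing an isomorphic copy of l¹. Then the dual space P* does not have the Schur property. (Pethe–Thakare.) -/
open Topology Filter
open scoped ENNReal NNReal BigOperators

noncomputable section PTaux


/-- Rademacher sign of coordinate `n` of a branch `σ`. -/
def Rr (n : ℕ) (σ : ℕ → Bool) : ℝ := if σ n then -1 else 1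

lemma Rr_mul_self (n : ℕ) (σ : ℕ → Bool) : Rr n σ * Rr n σ = 1 := by
  unfold Rr; split <;> norm_num

lemma abs_Rr (n : ℕ) (σ : ℕ → Bool) : |Rr n σ| ≤ 1 := by
  unfold Rr; split <;> norm_num

/-- Extend a finite binary string to a branch (pad with `false`). -/
def extb {m : ℕ} (τ : Fin m → Bool) : ℕ → Bool := fun k => if h : k < m then τ ⟨k, h⟩ else false

lemma sum_Rr_orth {m n k : ℕ} (hn : n < m) (hnk : n ≠ k) :
    ∑ τ : Fin m → Bool, Rr n (extb τ) * Rr k (extb τ) = 0 := by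
  classical
  apply Finset.sum_ninvolution (fun τ => Function.update τ ⟨n, hn⟩ (!(τ ⟨n, hn⟩)))
  · intro τ
    have h1 : Rr n (extb (Function.update τ ⟨n, hn⟩ (!(τ ⟨n, hn⟩)))) = - Rr n (extb τ) := by
      unfold Rr extb
      rw [dif_pos hn, dif_pos hn, Function.update_self]
      cases τ ⟨n, hn⟩ <;> norm_num
    have h2 : Rr k (extb (Function.update τ ⟨n, hn⟩ (!(τ ⟨n, hn⟩)))) = Rr k (extb τ) := by
      unfold Rr extb
      by_cases hk : k < m
      · rw [dif_pos hk, dif_pos hk, Function.update_of_ne (by simp [Fin.ext_iff, Ne.symm hnk])]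
      · rw [dif_neg hk, dif_neg hk]
    rw [h1, h2]; ring
  · intro τ _
    intro hcontra
    have := congrFun hcontra ⟨n, hn⟩
    rw [Function.update_self] at this
    exact absurd this (by cases τ ⟨n, hn⟩ <;> simp)
  · intro τ; exact Finset.mem_univ _
  · intro τ
    funext j
    by_cases hj : j = ⟨n, hn⟩
    · subst hj; simp
    · rw [Function.update_of_ne hj, Function.update_of_ne hj]

lemma sum_Rr_self {m n : ℕ} :
    ∑ τ : Fin m → Bool, Rr n (extb τ) * Rr n (extb τ) = (Fintype.card (Fin m → Bool) : ℝ) := by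
  simp [Rr_mul_self, Finset.card_univ]


abbrev Xl1 : Type := lp (fun _ : ℕ => ℝ) 1

lemma Xl1_summable (x : Xl1) : Summable (fun k => ‖(x : ∀ _ : ℕ, ℝ) k‖) := by
  have := (lp.memℓp x).summable (by norm_num : 0 < (1 : ℝ≥0∞).toReal)
  simpa [ENNReal.toReal_one, Real.rpow_one] using this

lemma Xl1_norm (x : Xl1) : ‖x‖ = ∑' k, ‖(x : ∀ _ : ℕ, ℝ) k‖ := by
  rw [lp.norm_eq_tsum_rpow (by norm_num) x]
  simp

lemma Rr_summable (σ : ℕ → Bool) (x : Xl1) :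
    Summable (fun k => Rr k σ * (x : ∀ _ : ℕ, ℝ) k) := by
  apply Summable.of_norm_bounded (Xl1_summable x)
  intro k
  rw [norm_mul]
  calc ‖Rr k σ‖ * ‖(x : ∀ _ : ℕ, ℝ) k‖ ≤ 1 * ‖(x : ∀ _ : ℕ, ℝ) k‖ := by
        apply mul_le_mul_of_nonneg_right _ (norm_nonneg _)
        simpa [Real.norm_eq_abs] using abs_Rr k σ
  _ = _ := one_mul _

/-- The branch functional on `ℓ¹`. -/
def sFun (σ : ℕ → Bool) : Xl1 →ₗ[ℝ] ℝ where
  toFun x := ∑' k, Rr k σ * (x : ∀ _ : ℕ, ℝ) k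
  map_add' x y := by
    simp only [lp.coeFn_add, Pi.add_apply, mul_add]
    exact Summable.tsum_add (Rr_summable σ x) (Rr_summable σ y)
  map_smul' a x := by
    simp only [lp.coeFn_smul, Pi.smul_apply, smul_eq_mul, RingHom.id_apply]
    rw [← tsum_mul_left]
    congr 1; funext k; ring

lemma abs_sFun_le (σ : ℕ → Bool) (x : Xl1) : |sFun σ x| ≤ ‖x‖ := by
  rw [Xl1_norm]
  calc |sFun σ x| ≤ ∑' k, ‖Rr k σ * (x : ∀ _ : ℕ, ℝ) k‖ := by
        rw [← Real.norm_eq_abs]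
        exact norm_tsum_le_tsum_norm ((Rr_summable σ x).norm)
  _ ≤ ∑' k, ‖(x : ∀ _ : ℕ, ℝ) k‖ := by
        apply Summable.tsum_le_tsum _ ((Rr_summable σ x).norm) (Xl1_summable x)
        intro k
        rw [norm_mul]
        calc ‖Rr k σ‖ * ‖(x : ∀ _ : ℕ, ℝ) k‖ ≤ 1 * ‖(x : ∀ _ : ℕ, ℝ) k‖ := by
              apply mul_le_mul_of_nonneg_right _ (norm_nonneg _)
              simpa [Real.norm_eq_abs] using abs_Rr k σ
        _ = _ := one_mul _

def eX (n : ℕ) : Xl1 := lp.single 1 n (1 : ℝ)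

lemma eX_norm (n : ℕ) : ‖eX n‖ = 1 := by
  have := lp.norm_single (E := fun _ : ℕ => ℝ) (p := 1) (by norm_num) n (1 : ℝ)
  simpa [eX] using this

lemma sFun_eX (σ : ℕ → Bool) (n : ℕ) : sFun σ (eX n) = Rr n σ := by
  show (∑' k, Rr k σ * ((eX n) : ∀ _ : ℕ, ℝ) k) = Rr n σ
  rw [tsum_eq_single n]
  · rw [show ((eX n) : ∀ _ : ℕ, ℝ) n = 1 from lp.single_apply_self 1 n 1, mul_one]
  · intro k hk
    rw [show ((eX n) : ∀ _ : ℕ, ℝ) k = 0 from lp.single_apply_ne 1 n 1 hk, mul_zero]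


lemma sum_sq_w (F : Finset ℕ) (ε : ℕ → ℝ) (hε : ∀ n, ε n = 1 ∨ ε n = -1) {m : ℕ}
    (hm : ∀ n ∈ F, n < m) :
    ∑ τ : Fin m → Bool, (∑ n ∈ F, ε n * Rr n (extb τ)) ^ 2
      = (F.card : ℝ) * (Fintype.card (Fin m → Bool) : ℝ) := by
  classical
  have expand : ∀ τ : Fin m → Bool, (∑ n ∈ F, ε n * Rr n (extb τ)) ^ 2
      = ∑ n ∈ F, ∑ k ∈ F, (ε n * ε k) * (Rr n (extb τ) * Rr k (extb τ)) := by
    intro τ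
    rw [sq, Finset.sum_mul_sum]
    apply Finset.sum_congr rfl; intro n _
    apply Finset.sum_congr rfl; intro k _
    ring
  rw [Finset.sum_congr rfl (fun τ _ => expand τ)]
  rw [Finset.sum_comm]
  have : ∀ n ∈ F, ∑ τ : Fin m → Bool, ∑ k ∈ F, (ε n * ε k) * (Rr n (extb τ) * Rr k (extb τ))
      = (Fintype.card (Fin m → Bool) : ℝ) := by
    intro n hn
    rw [Finset.sum_comm]
    have hdiag : ∀ k ∈ F, ∑ τ : Fin m → Bool, (ε n * ε k) * (Rr n (extb τ) * Rr k (extb τ))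
        = if k = n then (Fintype.card (Fin m → Bool) : ℝ) else 0 := by
      intro k _
      rw [← Finset.mul_sum]
      by_cases hkn : k = n
      · subst hkn
        rw [sum_Rr_self]
        rcases hε k with h | h <;> simp [h]
      · rw [sum_Rr_orth (hm n hn) (Ne.symm hkn), if_neg hkn, mul_zero]
    rw [Finset.sum_congr rfl hdiag, Finset.sum_ite_eq' F n (fun _ => _), if_pos hn]
  rw [Finset.sum_congr rfl this, Finset.sum_const, nsmul_eq_mul]

lemma key_sum_bound (F : Finset ℕ) (ε : ℕ → ℝ) (hε : ∀ n, ε n = 1 ∨ ε n = -1) {m : ℕ}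
    (hm : ∀ n ∈ F, n < m) :
    ∑ τ : Fin m → Bool, |∑ n ∈ F, ε n * Rr n (extb τ)| ≤
      (Fintype.card (Fin m → Bool) : ℝ) * Real.sqrt F.card := by
  classical
  set C : ℝ := (Fintype.card (Fin m → Bool) : ℝ) with hC
  have hCpos : 0 < C := by positivity
  have hcs := Finset.sum_mul_sq_le_sq_mul_sq (Finset.univ : Finset (Fin m → Bool))
    (fun τ => |∑ n ∈ F, ε n * Rr n (extb τ)|) (fun _ => 1)
  simp only [mul_one, one_pow, Finset.sum_const, Finset.card_univ, nsmul_eq_mul, sq_abs] at hcs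
  rw [sum_sq_w F ε hε hm] at hcs
  -- hcs : (∑ |w|)^2 ≤ (F.card * C) * C
  have hnn : 0 ≤ ∑ τ : Fin m → Bool, |∑ n ∈ F, ε n * Rr n (extb τ)| :=
    Finset.sum_nonneg fun _ _ => abs_nonneg _
  have h2 : (∑ τ : Fin m → Bool, |∑ n ∈ F, ε n * Rr n (extb τ)|) ^ 2 ≤ (C * Real.sqrt F.card)^2 := by
    calc _ ≤ (F.card : ℝ) * C * C := hcs
    _ = (C * Real.sqrt F.card)^2 := by
        rw [mul_pow, Real.sq_sqrt (by positivity)]; ring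
  have h3 := Real.sqrt_le_sqrt h2
  rwa [Real.sqrt_sq hnn, Real.sqrt_sq (by positivity)] at h3

end PTaux

set_option maxHeartbeats 2000000 in
/-- **Pethe–Thakare**: if a Banach space `P` contains an isomorphic copy of `ℓ¹`, then its dual
`P*` does not have the Schur property. -/
theorem stmt18 {P : Type*} [NormedAddCommGroup P] [NormedSpace ℝ P] [CompleteSpace P]
    (h : ∃ (f : lp (fun _ : ℕ => ℝ) 1 →L[ℝ] P) (c : ℝ), 0 < c ∧
      ∀ x : lp (fun _ : ℕ => ℝ) 1, c * ‖x‖ ≤ ‖f x‖) :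
    ¬ ∀ (φ : ℕ → StrongDual ℝ P) (ψ : StrongDual ℝ P),
        Tendsto φ atTop (@nhds _ (weakTop (StrongDual ℝ P)) ψ) →
          Tendsto φ atTop (nhds ψ) := by
  classical
  obtain ⟨f, c, hc, hfc⟩ := h
  intro H
  -- basic facts
  have hinj : Function.Injective f := by
    intro x y hxy
    have h0 : c * ‖x - y‖ ≤ ‖f (x - y)‖ := hfc _
    rw [map_sub, hxy, sub_self, norm_zero] at h0
    have h1 : ‖x - y‖ ≤ 0 := by nlinarith [norm_nonneg (x - y)]
    have h2 : x - y = 0 := norm_le_zero_iff.mp h1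
    exact sub_eq_zero.mp h2
  -- Hahn-Banach extensions of branch functionals
  have hEex : ∀ σ : ℕ → Bool, ∃ E : StrongDual ℝ P,
      (∀ x : Xl1, E (f x) = sFun σ x) ∧ ∀ p : P, |E p| ≤ c⁻¹ * ‖p‖ := by
    intro σ
    have hinj' : Function.Injective (f : Xl1 →ₗ[ℝ] P) := hinj
    set Y : Subspace ℝ P := LinearMap.range (f : Xl1 →ₗ[ℝ] P) with hY
    set e : Xl1 ≃ₗ[ℝ] Y := LinearEquiv.ofInjective (f : Xl1 →ₗ[ℝ] P) hinj' with he
    have hecoe : ∀ x : Xl1, ((e x : Y) : P) = f x := fun x =>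
      LinearEquiv.ofInjective_apply (f : Xl1 →ₗ[ℝ] P) x
    set glin : Y →ₗ[ℝ] ℝ := (sFun σ).comp e.symm.toLinearMap with hg
    have hfe : ∀ y : Y, f (e.symm y) = (y : P) := by
      intro y
      have h := hecoe (e.symm y)
      rw [e.apply_symm_apply] at h
      exact h.symm
    have hgb : ∀ y : Y, ‖glin y‖ ≤ c⁻¹ * ‖y‖ := by
      intro y
      have h2 : |sFun σ (e.symm y)| ≤ ‖(e.symm y : Xl1)‖ := abs_sFun_le _ _
      have h3 : c * ‖(e.symm y : Xl1)‖ ≤ ‖(y : P)‖ := by rw [← hfe y]; exact hfc _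
      have hynorm : ‖y‖ = ‖(y : P)‖ := rfl
      rw [Real.norm_eq_abs]
      show |sFun σ (e.symm y)| ≤ c⁻¹ * ‖y‖
      calc |sFun σ (e.symm y)| ≤ ‖(e.symm y : Xl1)‖ := h2
        _ ≤ c⁻¹ * ‖(y : P)‖ := by
            rw [inv_mul_eq_div, le_div_iff₀ hc, mul_comm]
            exact h3
        _ = c⁻¹ * ‖y‖ := by rw [hynorm]
    set g : Y →L[ℝ] ℝ := LinearMap.mkContinuous glin c⁻¹ hgb with hgc
    obtain ⟨E, hEext, hEnorm⟩ := exists_extension_norm_eq Y g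
    refine ⟨E, fun x => ?_, fun p => ?_⟩
    · have hmem : f x ∈ Y := ⟨x, rfl⟩
      have h4 := hEext ⟨f x, hmem⟩
      have h5 : e.symm ⟨f x, hmem⟩ = x := by
        apply hinj'
        have h6 := hfe ⟨f x, hmem⟩
        simpa using h6
      have h7 : g ⟨f x, hmem⟩ = sFun σ (e.symm ⟨f x, hmem⟩) := rfl
      rw [show E (f x) = E ((⟨f x, hmem⟩ : Y) : P) from rfl, h4, h7, h5]
    · rw [← Real.norm_eq_abs]
      calc ‖E p‖ ≤ ‖E‖ * ‖p‖ := E.le_opNorm p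
        _ ≤ c⁻¹ * ‖p‖ := by
            apply mul_le_mul_of_nonneg_right _ (norm_nonneg p)
            rw [hEnorm]
            exact LinearMap.mkContinuous_norm_le _ (by positivity) _
  choose E hEf hEbd using hEex
  -- the level averages
  set Φ : ℕ → ℕ → StrongDual ℝ P := fun n m =>
    ((Fintype.card (Fin m → Bool) : ℝ))⁻¹ •
      ∑ τ : Fin m → Bool, Rr n (extb τ) • E (extb τ) with hΦ
  have hΦapply : ∀ n m p, Φ n m p =
      ((Fintype.card (Fin m → Bool) : ℝ))⁻¹ *
        ∑ τ : Fin m → Bool, Rr n (extb τ) * E (extb τ) p := by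
    intro n m p
    simp [hΦ, ContinuousLinearMap.sum_apply, smul_eq_mul]
  have hΦbd : ∀ n m p, |Φ n m p| ≤ c⁻¹ * ‖p‖ := by
    intro n m p
    rw [hΦapply]
    set C : ℝ := (Fintype.card (Fin m → Bool) : ℝ) with hC
    have hCpos : (0:ℝ) < C := by positivity
    rw [abs_mul, abs_inv, abs_of_pos hCpos]
    have h1 : |∑ τ : Fin m → Bool, Rr n (extb τ) * E (extb τ) p| ≤ C * (c⁻¹ * ‖p‖) := by
      calc |∑ τ : Fin m → Bool, Rr n (extb τ) * E (extb τ) p|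
          ≤ ∑ τ : Fin m → Bool, |Rr n (extb τ) * E (extb τ) p| := Finset.abs_sum_le_sum_abs _ _
        _ ≤ ∑ τ : Fin m → Bool, c⁻¹ * ‖p‖ := by
            apply Finset.sum_le_sum
            intro τ _
            rw [abs_mul]
            calc |Rr n (extb τ)| * |E (extb τ) p| ≤ 1 * (c⁻¹ * ‖p‖) :=
                  mul_le_mul (abs_Rr _ _) (hEbd _ p) (abs_nonneg _) zero_le_one
              _ = _ := one_mul _
        _ = C * (c⁻¹ * ‖p‖) := by rw [Finset.sum_const, Finset.card_univ, nsmul_eq_mul]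
    calc C⁻¹ * |∑ τ : Fin m → Bool, Rr n (extb τ) * E (extb τ) p|
        ≤ C⁻¹ * (C * (c⁻¹ * ‖p‖)) := by
          exact mul_le_mul_of_nonneg_left h1 (by positivity)
      _ = c⁻¹ * ‖p‖ := by field_simp
  -- ultrafilter limits
  set U : Ultrafilter ℕ := Ultrafilter.of atTop with hUdef
  have hU : (U : Filter ℕ) ≤ atTop := Ultrafilter.of_le _
  have hlim : ∀ n (p : P), ∃ L : ℝ, Tendsto (fun m => Φ n m p) (U : Filter ℕ) (𝓝 L) := by
    intro n p
    have hmem : ∀ m, Φ n m p ∈ Set.Icc (-(c⁻¹ * ‖p‖)) (c⁻¹ * ‖p‖) := by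
      intro m
      have := hΦbd n m p
      rw [abs_le] at this
      exact ⟨this.1, this.2⟩
    obtain ⟨a, _, ha⟩ := (isCompact_Icc (a := -(c⁻¹ * ‖p‖)) (b := c⁻¹ * ‖p‖)).ultrafilter_le_nhds
      (U.map (fun m => Φ n m p)) (by
        rw [le_principal_iff, Ultrafilter.mem_coe, Ultrafilter.mem_map]
        exact Filter.univ_mem' hmem)
    exact ⟨a, by rwa [Ultrafilter.coe_map] at ha⟩
  choose L hL using hlim
  have hLbd : ∀ n p, |L n p| ≤ c⁻¹ * ‖p‖ := by
    intro n p
    exact le_of_tendsto (hL n p).abs (Filter.Eventually.of_forall fun m => hΦbd n m p)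
  -- the weakly null sequence
  set φ : ℕ → StrongDual ℝ P := fun n =>
    LinearMap.mkContinuous
      { toFun := L n
        map_add' := fun p q => by
          refine tendsto_nhds_unique (hL n (p + q)) ?_
          have := (hL n p).add (hL n q)
          simpa only [← map_add] using this
        map_smul' := fun a p => by
          have h2 : Tendsto (fun m => Φ n m (a • p)) (U : Filter ℕ) (𝓝 (a * L n p)) := by
            refine ((hL n p).const_mul a).congr fun m => ?_
            simp
          simpa using tendsto_nhds_unique (hL n (a • p)) h2 }
      c⁻¹ (fun p => by simpa [Real.norm_eq_abs] using hLbd n p) with hφdef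
  have hφapply : ∀ n p, φ n p = L n p := fun n p => rfl
  -- evaluation at the basis vectors
  have hφ_feX : ∀ n, φ n (f (eX n)) = 1 := by
    intro n
    have hconst : ∀ m, Φ n m (f (eX n)) = 1 := by
      intro m
      rw [hΦapply]
      have hterm : ∀ τ : Fin m → Bool, Rr n (extb τ) * E (extb τ) (f (eX n)) = 1 := by
        intro τ
        rw [hEf, sFun_eX, Rr_mul_self]
      rw [Finset.sum_congr rfl (fun τ _ => hterm τ), Finset.sum_const, Finset.card_univ,
        nsmul_eq_mul, mul_one]
      have hCpos : (0:ℝ) < (Fintype.card (Fin m → Bool) : ℝ) := by positivity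
      field_simp
    have h1 : Tendsto (fun m => Φ n m (f (eX n))) (U : Filter ℕ) (𝓝 1) := by
      simp only [hconst]
      exact tendsto_const_nhds
    rw [hφapply]
    exact tendsto_nhds_unique (hL n (f (eX n))) h1
  -- the crucial square-root norm bound for signed sums
  have normbound : ∀ (F : Finset ℕ) (ε : ℕ → ℝ), (∀ n, ε n = 1 ∨ ε n = -1) →
      ‖∑ n ∈ F, ε n • φ n‖ ≤ c⁻¹ * Real.sqrt F.card := by
    intro F ε hε
    apply ContinuousLinearMap.opNorm_le_bound _ (by positivity)
    intro p
    have happ : (∑ n ∈ F, ε n • φ n) p = ∑ n ∈ F, ε n * L n p := by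
      simp [ContinuousLinearMap.sum_apply, hφapply]
    have htend : Tendsto (fun m => ∑ n ∈ F, ε n * Φ n m p) (U : Filter ℕ)
        (𝓝 (∑ n ∈ F, ε n * L n p)) :=
      tendsto_finset_sum F (fun n _ => (hL n p).const_mul (ε n))
    have hev : ∀ᶠ m in (U : Filter ℕ), |∑ n ∈ F, ε n * Φ n m p| ≤ c⁻¹ * Real.sqrt F.card * ‖p‖ := by
      refine hU (eventually_atTop.mpr ⟨(F.sup id) + 1, fun m hm => ?_⟩)
      have hmF : ∀ n ∈ F, n < m := fun n hn =>
        lt_of_le_of_lt (Finset.le_sup (f := id) hn) (lt_of_lt_of_le (Nat.lt_succ_self _) hm)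
      set C : ℝ := (Fintype.card (Fin m → Bool) : ℝ) with hCd
      have hCpos : (0:ℝ) < C := by positivity
      have e1 : ∀ n ∈ F, ε n * Φ n m p
          = C⁻¹ * ∑ τ : Fin m → Bool, ε n * Rr n (extb τ) * E (extb τ) p := by
        intro n _
        rw [hΦapply n m p, mul_left_comm, Finset.mul_sum]
        congr 1
        exact Finset.sum_congr rfl fun τ _ => by ring
      have hsw : ∑ n ∈ F, ε n * Φ n m p
          = C⁻¹ * ∑ τ : Fin m → Bool, (∑ n ∈ F, ε n * Rr n (extb τ)) * E (extb τ) p := by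
        calc ∑ n ∈ F, ε n * Φ n m p
            = ∑ n ∈ F, C⁻¹ * ∑ τ : Fin m → Bool, ε n * Rr n (extb τ) * E (extb τ) p :=
              Finset.sum_congr rfl e1
          _ = C⁻¹ * ∑ n ∈ F, ∑ τ : Fin m → Bool, ε n * Rr n (extb τ) * E (extb τ) p :=
              (Finset.mul_sum _ _ _).symm
          _ = C⁻¹ * ∑ τ : Fin m → Bool, ∑ n ∈ F, ε n * Rr n (extb τ) * E (extb τ) p := by
              rw [Finset.sum_comm]
          _ = C⁻¹ * ∑ τ : Fin m → Bool, (∑ n ∈ F, ε n * Rr n (extb τ)) * E (extb τ) p := by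
              congr 1
              exact Finset.sum_congr rfl fun τ _ => (Finset.sum_mul _ _ _).symm
      rw [hsw, abs_mul, abs_inv, abs_of_pos hCpos]
      have hb1 : |∑ τ : Fin m → Bool, (∑ n ∈ F, ε n * Rr n (extb τ)) * E (extb τ) p|
          ≤ (C * Real.sqrt F.card) * (c⁻¹ * ‖p‖) := by
        calc |∑ τ : Fin m → Bool, (∑ n ∈ F, ε n * Rr n (extb τ)) * E (extb τ) p|
            ≤ ∑ τ : Fin m → Bool, |(∑ n ∈ F, ε n * Rr n (extb τ)) * E (extb τ) p| :=
              Finset.abs_sum_le_sum_abs _ _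
          _ ≤ ∑ τ : Fin m → Bool, |∑ n ∈ F, ε n * Rr n (extb τ)| * (c⁻¹ * ‖p‖) := by
              apply Finset.sum_le_sum
              intro τ _
              rw [abs_mul]
              exact mul_le_mul_of_nonneg_left (hEbd _ p) (abs_nonneg _)
          _ = (∑ τ : Fin m → Bool, |∑ n ∈ F, ε n * Rr n (extb τ)|) * (c⁻¹ * ‖p‖) :=
              (Finset.sum_mul _ _ _).symm
          _ ≤ (C * Real.sqrt F.card) * (c⁻¹ * ‖p‖) :=
              mul_le_mul_of_nonneg_right (key_sum_bound F ε hε hmF) (by positivity)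
      calc C⁻¹ * |∑ τ : Fin m → Bool, (∑ n ∈ F, ε n * Rr n (extb τ)) * E (extb τ) p|
          ≤ C⁻¹ * ((C * Real.sqrt F.card) * (c⁻¹ * ‖p‖)) :=
            mul_le_mul_of_nonneg_left hb1 (by positivity)
        _ = c⁻¹ * Real.sqrt F.card * ‖p‖ := by
            field_simp
    rw [Real.norm_eq_abs, happ]
    exact le_of_tendsto htend.abs hev
  -- weak-null: pairing with any functional on the dual tends to 0
  have keyC : ∀ Θ : StrongDual ℝ (StrongDual ℝ P),
      Tendsto (fun n => Θ (φ n)) atTop (𝓝 0) := by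
    intro Θ
    set a : ℕ → ℝ := fun n => Θ (φ n) with ha
    set K : ℝ := ‖Θ‖ * c⁻¹ with hK
    have hK0 : 0 ≤ K := by positivity
    have key : ∀ F : Finset ℕ, ∑ n ∈ F, |a n| ≤ K * Real.sqrt F.card := by
      intro F
      set ε : ℕ → ℝ := fun n => if 0 ≤ a n then 1 else -1 with hεd
      have hε : ∀ n, ε n = 1 ∨ ε n = -1 := fun n => by
        by_cases h0 : 0 ≤ a n <;> simp [hεd, h0]
      have hεa : ∀ n, ε n * a n = |a n| := by
        intro n
        by_cases h0 : 0 ≤ a n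
        · rw [abs_of_nonneg h0]
          simp [hεd, h0]
        · rw [abs_of_neg (lt_of_not_ge h0)]
          simp [hεd, h0]
      have h1 : Θ (∑ n ∈ F, ε n • φ n) = ∑ n ∈ F, |a n| := by
        rw [map_sum]
        refine Finset.sum_congr rfl fun n _ => ?_
        rw [map_smul, smul_eq_mul]
        exact hεa n
      have h2 : Θ (∑ n ∈ F, ε n • φ n) ≤ ‖Θ‖ * ‖∑ n ∈ F, ε n • φ n‖ := by
        calc Θ (∑ n ∈ F, ε n • φ n) ≤ |Θ (∑ n ∈ F, ε n • φ n)| := le_abs_self _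
          _ ≤ ‖Θ‖ * ‖∑ n ∈ F, ε n • φ n‖ := by
              rw [← Real.norm_eq_abs]
              exact Θ.le_opNorm _
      calc ∑ n ∈ F, |a n| = Θ (∑ n ∈ F, ε n • φ n) := h1.symm
        _ ≤ ‖Θ‖ * ‖∑ n ∈ F, ε n • φ n‖ := h2
        _ ≤ ‖Θ‖ * (c⁻¹ * Real.sqrt F.card) :=
            mul_le_mul_of_nonneg_left (normbound F ε hε) (by positivity)
        _ = K * Real.sqrt F.card := by rw [hK]; ring
    have hfin : ∀ b : ℝ, 0 < b → {n : ℕ | b ≤ |a n|}.Finite := by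
      intro b hb
      by_contra hnf
      have hinf : {n : ℕ | b ≤ |a n|}.Infinite := hnf
      set k : ℕ := ⌈(K / b)^2⌉₊ + 1 with hk
      obtain ⟨F, hFsub, hFcard⟩ := hinf.exists_subset_card_eq k
      have h1 : (k : ℝ) * b ≤ ∑ n ∈ F, |a n| := by
        calc (k:ℝ) * b = ∑ _n ∈ F, b := by rw [Finset.sum_const, hFcard, nsmul_eq_mul]
          _ ≤ ∑ n ∈ F, |a n| := Finset.sum_le_sum fun n hn => hFsub hn
      have h2 := key F
      rw [hFcard] at h2
      have hkpos : (0:ℝ) < (k:ℝ) := by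
        have : 0 < k := Nat.succ_pos _
        exact_mod_cast this
      have hsq : 0 < Real.sqrt ((k:ℝ)) := Real.sqrt_pos.mpr hkpos
      have h3 : (k:ℝ) * b ≤ K * Real.sqrt (k:ℝ) := le_trans h1 h2
      have h4 : Real.sqrt (k:ℝ) * Real.sqrt (k:ℝ) = (k:ℝ) := Real.mul_self_sqrt (le_of_lt hkpos)
      have h5 : Real.sqrt (k:ℝ) ≤ K / b := by
        rw [le_div_iff₀ hb]
        nlinarith [h3, h4, hsq]
      have h6 : (k:ℝ) ≤ (K/b)^2 := by nlinarith [h4, h5, hsq]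
      have h7 : (k:ℝ) ≤ (⌈(K/b)^2⌉₊ : ℝ) := le_trans h6 (Nat.le_ceil _)
      have h8 : k ≤ ⌈(K/b)^2⌉₊ := by exact_mod_cast h7
      omega
    rw [← Nat.cofinite_eq_atTop, Metric.tendsto_nhds]
    intro b hb
    rw [eventually_cofinite]
    have hsub : {n : ℕ | ¬ dist (a n) 0 < b} ⊆ {n : ℕ | b ≤ |a n|} := by
      intro n hn
      simp only [Set.mem_setOf_eq, Real.dist_eq, sub_zero, not_lt] at hn
      exact hn
    exact ((hfin b hb).subset hsub)
  -- convert to weak topology convergence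
  have hweak : Tendsto φ atTop (@nhds _ (weakTop (StrongDual ℝ P)) 0) := by
    have hto : weakTop (StrongDual ℝ P) = TopologicalSpace.induced
        (fun (x : StrongDual ℝ P)
          (y : StrongDual ℝ (StrongDual ℝ P)) => y x)
        Pi.topologicalSpace := rfl
    rw [hto, nhds_induced, tendsto_comap_iff]
    refine tendsto_pi_nhds.mpr fun Θ => ?_
    simpa using keyC Θ
  have hnorm := H φ 0 hweak
  -- contradiction with the norm lower bound
  have hf0 : 0 < ‖f‖ := by
    have h1 := hfc (eX 0)
    rw [eX_norm, mul_one] at h1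
    have h2 : ‖f (eX 0)‖ ≤ ‖f‖ * ‖eX 0‖ := f.le_opNorm _
    rw [eX_norm, mul_one] at h2
    linarith
  have hlow : ∀ n, ‖f‖⁻¹ ≤ ‖φ n‖ := by
    intro n
    have h2 : |φ n (f (eX n))| ≤ ‖φ n‖ * ‖f (eX n)‖ := by
      rw [← Real.norm_eq_abs]
      exact (φ n).le_opNorm _
    have h3 : ‖f (eX n)‖ ≤ ‖f‖ := by
      calc ‖f (eX n)‖ ≤ ‖f‖ * ‖eX n‖ := f.le_opNorm _
        _ = ‖f‖ := by rw [eX_norm, mul_one]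
    have h4 : (1:ℝ) ≤ ‖φ n‖ * ‖f‖ := by
      rw [hφ_feX n] at h2
      simp only [abs_one] at h2
      nlinarith [norm_nonneg (φ n)]
    rw [inv_eq_one_div, div_le_iff₀ hf0]
    linarith
  have h0 : Tendsto (fun n => ‖φ n‖) atTop (𝓝 0) := by
    simpa using hnorm.norm
  have hev2 : ∀ᶠ n in atTop, ‖φ n‖ < ‖f‖⁻¹ :=
    h0.eventually (gt_mem_nhds (by positivity))
  obtain ⟨n, hn⟩ := hev2.exists
  exact absurd (hlow n) (not_le.mpr hn)
end
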